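/- arXiv:1807.01478 — 3 statements merged into one kernel-verified Lean document; each statement's English description precedes it below -/
import Mathlib

section
/- There is an absolute constant C such that for every n ≥ 2 and every n×n integer unit-Monge matrix M all of whose entries are nonnegative, there exists a weighted digraph H that is a DAG, has nonnegative integer edge weights, has size at most C·n·(log₂ n + 1), and contains 2n distinct distinguished vertices r[1],…,r[n], c[1],…,c[n], such that for all 1 ≤ i, j ≤ n a directed path from r[i] to c[j] exists in H and the distance d_H(r[i], c[j]) equals M[i,j]. -/
/-- A weighted digraph: a finite vertex set `V ⊆ ℕ`, an edge set `E ⊆ V × V`,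
and an integer weight function on edges. -/
structure WDigraph where
  V : Finset ℕ
  E : Finset (ℕ × ℕ)
  w : ℕ × ℕ → ℤ
  edge_fst : ∀ e ∈ E, e.1 ∈ V
  edge_snd : ∀ e ∈ E, e.2 ∈ V

/-- The weight of a walk, given as the list of its vertices, under weight
function `w`: the sum of the weights of its consecutive edges. -/
def walkWeight (w : ℕ × ℕ → ℤ) (l : List ℕ) : ℤ :=
  ((l.zip l.tail).map w).sum

/-- A directed walk in `H`: a nonempty list of vertices of `H` in which each
consecutive pair is an edge of `H`. -/
def IsWalk (H : WDigraph) (l : List ℕ) : Prop :=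
  l ≠ [] ∧ (∀ v ∈ l, v ∈ H.V) ∧ List.Chain' (fun u v => (u, v) ∈ H.E) l

/-- A directed walk in `H` from `u` to `v`. -/
def IsWalkFromTo (H : WDigraph) (l : List ℕ) (u v : ℕ) : Prop :=
  IsWalk H l ∧ l.head? = some u ∧ l.getLast? = some v

/-- A directed path in `H` from `u` to `v`: a walk with no repeated vertex. -/
def IsPathFromTo (H : WDigraph) (l : List ℕ) (u v : ℕ) : Prop :=
  IsWalkFromTo H l u v ∧ l.Nodup

/-- `H` is a DAG: it contains no directed cycle, i.e. no closed walk using at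
least one edge. -/
def IsDAG (H : WDigraph) : Prop :=
  ¬ ∃ (v : ℕ) (l : List ℕ), 2 ≤ l.length ∧ IsWalkFromTo H l v v

/-- `d` is the distance from `u` to `v` in `H` under weight function `w`:
some directed path from `u` to `v` attains weight `d`, and every directed path
from `u` to `v` has weight at least `d`. -/
def HasDistW (H : WDigraph) (w : ℕ × ℕ → ℤ) (u v : ℕ) (d : ℤ) : Prop :=
  (∃ l, IsPathFromTo H l u v ∧ walkWeight w l = d) ∧
  ∀ l, IsPathFromTo H l u v → d ≤ walkWeight w l

/-- The size of a weighted digraph: number of vertices plus number of edges. -/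
def WDigraph.size (H : WDigraph) : ℕ := H.V.card + H.E.card

/-- An `n × m` integer matrix (1-based indexing) is Monge. -/
def IsMonge (n m : ℕ) (M : ℕ → ℕ → ℤ) : Prop :=
  ∀ i j, 1 ≤ i → i + 1 ≤ n → 1 ≤ j → j + 1 ≤ m →
    M (i + 1) j - M i j ≤ M (i + 1) (j + 1) - M i (j + 1)

/-- An `n × m` integer matrix (1-based indexing) is unit-Monge. -/
def IsUnitMonge (n m : ℕ) (M : ℕ → ℕ → ℤ) : Prop :=
  IsMonge n m M ∧
    ∀ i j, 1 ≤ i → i + 1 ≤ n → 1 ≤ j → j ≤ m →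
      M (i + 1) j - M i j = -1 ∨ M (i + 1) j - M i j = 0 ∨ M (i + 1) j - M i j = 1

namespace NUME

/-- row difference -/
def dl (M : ℕ → ℕ → ℤ) (k j : ℕ) : ℤ := M (k+1) j - M k j

/-- rows of node (ℓ,x) clipped to [1,n] -/
def blk (n ℓ x : ℕ) : Finset ℕ := Finset.Icc (x*2^ℓ+1) (min ((x+1)*2^ℓ) n)

/-- rows of node (ℓ,x) clipped to [1,n-1] -/
def sblk (n ℓ x : ℕ) : Finset ℕ := Finset.Icc (x*2^ℓ+1) (min ((x+1)*2^ℓ) (n-1))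

/-- signature of column j at node (ℓ,x) -/
def sg (n : ℕ) (M : ℕ → ℕ → ℤ) (ℓ x j : ℕ) : ℤ := ∑ k ∈ sblk n ℓ x, dl M k j

/-- representative of a signature value -/
def repA (n : ℕ) (M : ℕ → ℕ → ℤ) (ℓ x : ℕ) (s : ℤ) : ℕ :=
  if h : ((Finset.Icc 1 n).filter (fun j' => sg n M ℓ x j' = s)).Nonempty
  then ((Finset.Icc 1 n).filter (fun j' => sg n M ℓ x j' = s)).min' h else 0

/-- class representative of column j at node (ℓ,x) -/
def rp (n : ℕ) (M : ℕ → ℕ → ℤ) (ℓ x j : ℕ) : ℕ := repA n M ℓ x (sg n M ℓ x j)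

/-- min of M over rows of node (ℓ,x), at column j -/
def nuF (n : ℕ) (M : ℕ → ℕ → ℤ) (ℓ x j : ℕ) : ℤ :=
  if h : (blk n ℓ x).Nonempty then (blk n ℓ x).inf' h (fun i => M i j) else 0

def enc (a b c d : ℕ) : ℕ := Nat.pair a (Nat.pair b (Nat.pair c d))
def rV (i : ℕ) : ℕ := enc 0 i 0 0
def cV (j : ℕ) : ℕ := enc 1 j 0 0
def nV (ℓ x ρ : ℕ) : ℕ := enc 2 ℓ x ρ
def tg (u : ℕ) : ℕ := u.unpair.1
def d1 (u : ℕ) : ℕ := u.unpair.2.unpair.1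
def d2 (u : ℕ) : ℕ := u.unpair.2.unpair.2.unpair.1
def d3 (u : ℕ) : ℕ := u.unpair.2.unpair.2.unpair.2

@[simp] lemma tg_rV (i : ℕ) : tg (rV i) = 0 := by simp [tg, rV, enc]
@[simp] lemma tg_cV (j : ℕ) : tg (cV j) = 1 := by simp [tg, cV, enc]
@[simp] lemma tg_nV (ℓ x ρ : ℕ) : tg (nV ℓ x ρ) = 2 := by simp [tg, nV, enc]
@[simp] lemma d1_rV (i : ℕ) : d1 (rV i) = i := by simp [d1, rV, enc]
@[simp] lemma d1_cV (j : ℕ) : d1 (cV j) = j := by simp [d1, cV, enc]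
@[simp] lemma d1_nV (ℓ x ρ : ℕ) : d1 (nV ℓ x ρ) = ℓ := by simp [d1, nV, enc]
@[simp] lemma d2_nV (ℓ x ρ : ℕ) : d2 (nV ℓ x ρ) = x := by simp [d2, nV, enc]
@[simp] lemma d3_nV (ℓ x ρ : ℕ) : d3 (nV ℓ x ρ) = ρ := by simp [d3, nV, enc]

lemma rV_inj {i i' : ℕ} (h : rV i = rV i') : i = i' := by
  have := congrArg d1 h; simpa using this
lemma cV_inj {j j' : ℕ} (h : cV j = cV j') : j = j' := by
  have := congrArg d1 h; simpa using this
lemma rV_ne_cV (i j : ℕ) : rV i ≠ cV j := by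
  intro h; have := congrArg tg h; simp at this
lemma rV_ne_nV (i ℓ x ρ : ℕ) : rV i ≠ nV ℓ x ρ := by
  intro h; have := congrArg tg h; simp at this
lemma cV_ne_nV (j ℓ x ρ : ℕ) : cV j ≠ nV ℓ x ρ := by
  intro h; have := congrArg tg h; simp at this
lemma nV_inj {a b c a' b' c' : ℕ} (h : nV a b c = nV a' b' c') : a = a' ∧ b = b' ∧ c = c' := by
  refine ⟨?_, ?_, ?_⟩
  · have := congrArg d1 h; simpa using this
  · have := congrArg d2 h; simpa using this
  · have := congrArg d3 h; simpa using this

/-- edge weight function -/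
def wt (n : ℕ) (M : ℕ → ℕ → ℤ) : ℕ × ℕ → ℤ := fun e =>
  if tg e.1 = 2 ∧ tg e.2 = 2 then
    nuF n M (d1 e.1) (d2 e.1) (d3 e.2) - nuF n M (d1 e.2) (d2 e.2) (d3 e.2)
  else if tg e.2 = 1 then nuF n M (Nat.clog 2 n) 0 (d1 e.2)
  else 0

def xs (n ℓ : ℕ) : Finset ℕ := (Finset.Icc 1 n).image (fun i => (i-1)/2^ℓ)
def nodesAt (n : ℕ) (M : ℕ → ℕ → ℤ) (ℓ x : ℕ) : Finset ℕ :=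
  (Finset.Icc 1 n).image (fun j => nV ℓ x (rp n M ℓ x j))
def VS (n : ℕ) (M : ℕ → ℕ → ℤ) : Finset ℕ :=
  ((Finset.Icc 1 n).image rV) ∪ ((Finset.Icc 1 n).image cV) ∪
  (Finset.range (Nat.clog 2 n + 1)).biUnion (fun ℓ => (xs n ℓ).biUnion (fun x => nodesAt n M ℓ x))
def Een (n : ℕ) (M : ℕ → ℕ → ℤ) : Finset (ℕ×ℕ) :=
  (Finset.Icc 1 n).biUnion (fun i =>
    (Finset.Icc 1 n).image (fun j => (rV i, nV 0 (i-1) (rp n M 0 (i-1) j))))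
def Eup (n : ℕ) (M : ℕ → ℕ → ℤ) : Finset (ℕ×ℕ) :=
  (Finset.range (Nat.clog 2 n)).biUnion (fun ℓ => (xs n ℓ).biUnion (fun x =>
    (Finset.Icc 1 n).image (fun j =>
      (nV ℓ x (rp n M ℓ x j), nV (ℓ+1) (x/2) (rp n M (ℓ+1) (x/2) j)))))
def Eex (n : ℕ) (M : ℕ → ℕ → ℤ) : Finset (ℕ×ℕ) :=
  (Finset.Icc 1 n).image (fun j =>
    (nV (Nat.clog 2 n) 0 (rp n M (Nat.clog 2 n) 0 j), cV j))
def ES (n : ℕ) (M : ℕ → ℕ → ℤ) : Finset (ℕ×ℕ) := Een n M ∪ Eup n M ∪ Eex n M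

/-- potential for lower bound, target column j -/
def Phi (n : ℕ) (M : ℕ → ℕ → ℤ) (j u : ℕ) : ℤ :=
  if tg u = 0 then -(M (d1 u) j)
  else if tg u = 1 then
    (if h : (Finset.Icc 1 n).Nonempty then
      (Finset.Icc 1 n).inf' h (fun i => M i (d1 u) - M i j) else 0)
  else
    (if h : (blk n (d1 u) (d2 u)).Nonempty then
      (blk n (d1 u) (d2 u)).inf' h (fun i => M i (d3 u) - M i j) else 0)
    - nuF n M (d1 u) (d2 u) (d3 u)

def cvert (n : ℕ) (M : ℕ → ℕ → ℤ) (i j ℓ : ℕ) : ℕ :=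
  nV ℓ ((i-1)/2^ℓ) (rp n M ℓ ((i-1)/2^ℓ) j)
def clist (n : ℕ) (M : ℕ → ℕ → ℤ) (i j : ℕ) : List ℕ :=
  rV i :: ((List.range' 0 (Nat.clog 2 n + 1) 1).map (cvert n M i j) ++ [cV j])


section Infra
variable {α β γ : Type*}

lemma inf'_add_const [LinearOrder β] [AddGroup β] [CovariantClass β β (· + ·) (· ≤ ·)]
    [CovariantClass β β (Function.swap (· + ·)) (· ≤ ·)]
    (s : Finset α) (h : s.Nonempty) (f : α → β) (c : β) :
    s.inf' h (fun a => f a + c) = s.inf' h f + c := by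
  apply le_antisymm
  · obtain ⟨a, ha, hv⟩ := Finset.exists_mem_eq_inf' h f
    calc s.inf' h (fun a => f a + c) ≤ f a + c := Finset.inf'_le _ ha
    _ = _ := by rw [hv]
  · apply Finset.le_inf'
    intro b hb
    have : s.inf' h f ≤ f b := Finset.inf'_le _ hb
    exact add_le_add_left this c

lemma inf'_subset_le [LinearOrder β] {s t : Finset α} (hs : s.Nonempty) (hst : s ⊆ t)
    (f : α → β) : t.inf' (hs.mono hst) f ≤ s.inf' hs f := by
  apply Finset.le_inf'
  intro b hb
  exact Finset.inf'_le _ (hst hb)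

lemma card_image_factor [DecidableEq β] [DecidableEq γ] [Inhabited β]
    {s : Finset α} (f : α → β) (g : α → γ)
    (h : ∀ a ∈ s, ∀ b ∈ s, g a = g b → f a = f b) :
    (s.image f).card ≤ (s.image g).card := by
  classical
  apply Finset.card_le_card_of_surjOn
    (fun y => if h' : ∃ a ∈ s, g a = y then f h'.choose else default)
  intro b hb
  simp only [Finset.coe_image, Set.mem_image] at hb ⊢
  obtain ⟨a, ha, rfl⟩ := hb
  refine ⟨g a, ⟨a, ha, rfl⟩, ?_⟩
  have hex : ∃ a' ∈ s, g a' = g a := ⟨a, ha, rfl⟩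
  simp only [hex, dif_pos]
  exact h _ hex.choose_spec.1 _ ha hex.choose_spec.2

lemma walkWeight_cons_cons (w : ℕ × ℕ → ℤ) (a b : ℕ) (l : List ℕ) :
    walkWeight w (a :: b :: l) = w (a, b) + walkWeight w (b :: l) := by
  simp [walkWeight]

lemma walkWeight_single (w : ℕ × ℕ → ℤ) (a : ℕ) : walkWeight w [a] = 0 := by
  simp [walkWeight]

/-- potential inequality along a chain -/
lemma phi_chain (E : Finset (ℕ × ℕ)) (w : ℕ × ℕ → ℤ) (P : ℕ → ℤ)
    (hE : ∀ e ∈ E, P e.2 ≤ P e.1 + w e) :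
    ∀ l : List ℕ, l.Chain' (fun u v => (u, v) ∈ E) →
      ∀ u v, l.head? = some u → l.getLast? = some v → P v ≤ P u + walkWeight w l := by
  intro l
  induction l with
  | nil => intro _ u v h; simp at h
  | cons a l ih =>
    intro hch u v hu hv
    simp only [List.head?_cons, Option.some.injEq] at hu
    subst hu
    match l, hch with
    | [], _ =>
      simp only [List.getLast?_singleton, Option.some.injEq] at hv
      subst hv; simp [walkWeight_single]
    | b :: l', hch =>
      simp only [List.Chain', List.isChain_cons_cons] at hch
      have h1 : P b ≤ P a + w (a, b) := hE _ hch.1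
      have h2 : P v ≤ P b + walkWeight w (b :: l') := by
        apply ih hch.2 b v rfl
        simpa using hv
      rw [walkWeight_cons_cons]
      omega

/-- rank strictly increases along a chain of length ≥ 2 -/
lemma rank_chain (E : Finset (ℕ × ℕ)) (rk : ℕ → ℕ)
    (hE : ∀ e ∈ E, rk e.1 < rk e.2) :
    ∀ l : List ℕ, l.Chain' (fun u v => (u, v) ∈ E) → 2 ≤ l.length →
      ∀ u v, l.head? = some u → l.getLast? = some v → rk u < rk v := by
  intro l
  induction l with
  | nil => simp
  | cons a l ih =>
    intro hch hlen u v hu hv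
    simp only [List.head?_cons, Option.some.injEq] at hu
    subst hu
    match l, hch, hlen with
    | b :: l', hch, _ =>
      simp only [List.Chain', List.isChain_cons_cons] at hch
      have h1 : rk a < rk b := hE _ hch.1
      match l' with
      | [] =>
        simp only [List.getLast?_cons_cons, List.getLast?_singleton, Option.some.injEq] at hv
        subst hv
        exact h1
      | c :: l'' =>
        have h2 : rk b < rk v := by
          apply ih hch.2 (by simp) b v rfl
          simpa using hv
        omega
end Infra

section MathCore
variable {n : ℕ} {M : ℕ → ℕ → ℤ}

lemma telescope (M : ℕ → ℕ → ℤ) (j : ℕ) : ∀ a b : ℕ, a ≤ b →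
    M b j - M a j = ∑ k ∈ Finset.Ico a b, dl M k j := by
  intro a b hab
  induction b, hab using Nat.le_induction with
  | base => simp
  | succ b hb ih =>
    rw [Finset.sum_Ico_succ_top hb, ← ih, dl]
    ring

lemma sblk_bounds {ℓ x k : ℕ} (hn : 2 ≤ n) (hk : k ∈ sblk n ℓ x) :
    1 ≤ k ∧ k + 1 ≤ n := by
  simp only [sblk, Finset.mem_Icc] at hk
  omega

/-- row-differences are monotone in the column (Monge) -/
lemma dl_mono (hn : 2 ≤ n) (hMonge : IsMonge n n M) {k j j' : ℕ}
    (hk : 1 ≤ k) (hk2 : k + 1 ≤ n) (hj : 1 ≤ j) (hjj : j ≤ j') (hj' : j' ≤ n) :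
    dl M k j ≤ dl M k j' := by
  induction j', hjj using Nat.le_induction with
  | base => exact le_refl _
  | succ j' hj2 ih =>
    have h1 : dl M k j' ≤ dl M k (j' + 1) := hMonge k j' hk hk2 (by omega) hj'
    have h2 := ih (by omega)
    omega

/-- unit condition -/
lemma dl_abs (hUM : IsUnitMonge n n M) {k j : ℕ}
    (hk : 1 ≤ k) (hk2 : k + 1 ≤ n) (hj : 1 ≤ j) (hj' : j ≤ n) :
    dl M k j = -1 ∨ dl M k j = 0 ∨ dl M k j = 1 := hUM.2 k j hk hk2 hj hj'

/-- |sg| ≤ 2^ℓ -/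
lemma sg_bound (hn : 2 ≤ n) (hUM : IsUnitMonge n n M) {ℓ x j : ℕ}
    (hj : 1 ≤ j) (hj' : j ≤ n) : |sg n M ℓ x j| ≤ (2^ℓ : ℤ) := by
  have h1 : |sg n M ℓ x j| ≤ ∑ k ∈ sblk n ℓ x, |dl M k j| :=
    Finset.abs_sum_le_sum_abs _ _
  have h2 : ∑ k ∈ sblk n ℓ x, |dl M k j| ≤ ∑ _k ∈ sblk n ℓ x, (1:ℤ) := by
    apply Finset.sum_le_sum
    intro k hk
    obtain ⟨hka, hkb⟩ := sblk_bounds hn hk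
    rcases dl_abs hUM hka hkb hj hj' with h | h | h <;> rw [h] <;> norm_num
  have h3 : ((sblk n ℓ x).card : ℤ) ≤ (2^ℓ : ℤ) := by
    have : (sblk n ℓ x).card ≤ 2^ℓ := by
      rw [sblk, Nat.card_Icc]
      have h5 := Nat.min_le_left ((x+1)*2^ℓ) (n-1)
      have h4 : (x+1)*2^ℓ = x*2^ℓ + 2^ℓ := by ring
      have hp : (0:ℕ) < 2^ℓ := Nat.pow_pos (by norm_num)
      omega
    exact_mod_cast this
  rw [Finset.sum_const, nsmul_eq_mul, mul_one] at h2
  linarith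

/-- equal signatures force equal row-differences throughout the block -/
lemma sig_eq_dl_eq (hn : 2 ≤ n) (hM : IsUnitMonge n n M) {ℓ x j₁ j₂ : ℕ}
    (h1 : 1 ≤ j₁) (h1' : j₁ ≤ n) (h2 : 1 ≤ j₂) (h2' : j₂ ≤ n)
    (hs : sg n M ℓ x j₁ = sg n M ℓ x j₂) :
    ∀ k ∈ sblk n ℓ x, dl M k j₁ = dl M k j₂ := by
  rcases le_total j₁ j₂ with hle | hle
  · intro k hk
    by_contra hne
    obtain ⟨hka, hkb⟩ := sblk_bounds hn hk
    have hmono : ∀ k' ∈ sblk n ℓ x, dl M k' j₁ ≤ dl M k' j₂ := by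
      intro k' hk'
      obtain ⟨hka', hkb'⟩ := sblk_bounds hn hk'
      exact dl_mono hn hM.1 hka' hkb' h1 hle h2'
    have hlt : dl M k j₁ < dl M k j₂ := lt_of_le_of_ne (hmono k hk) hne
    have : sg n M ℓ x j₁ < sg n M ℓ x j₂ :=
      Finset.sum_lt_sum hmono ⟨k, hk, hlt⟩
    omega
  · intro k hk
    by_contra hne
    obtain ⟨hka, hkb⟩ := sblk_bounds hn hk
    have hmono : ∀ k' ∈ sblk n ℓ x, dl M k' j₂ ≤ dl M k' j₁ := by
      intro k' hk'
      obtain ⟨hka', hkb'⟩ := sblk_bounds hn hk'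
      exact dl_mono hn hM.1 hka' hkb' h2 hle h1'
    have hlt : dl M k j₂ < dl M k j₁ := lt_of_le_of_ne (hmono k hk) (Ne.symm hne)
    have : sg n M ℓ x j₂ < sg n M ℓ x j₁ :=
      Finset.sum_lt_sum hmono ⟨k, hk, hlt⟩
    omega

/-- from equal dl on sblk: column difference constant on the block -/
lemma const_on_blk {ℓ x j₁ j₂ : ℕ}
    (hd : ∀ k ∈ sblk n ℓ x, dl M k j₁ = dl M k j₂) :
    ∀ i₁ ∈ blk n ℓ x, ∀ i₂ ∈ blk n ℓ x, M i₁ j₁ - M i₁ j₂ = M i₂ j₁ - M i₂ j₂ := by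
  have key : ∀ i₁ i₂ : ℕ, i₁ ∈ blk n ℓ x → i₂ ∈ blk n ℓ x → i₁ ≤ i₂ →
      M i₁ j₁ - M i₁ j₂ = M i₂ j₁ - M i₂ j₂ := by
    intro i₁ i₂ hi₁ hi₂ hle
    simp only [blk, Finset.mem_Icc] at hi₁ hi₂
    have hsub : Finset.Ico i₁ i₂ ⊆ sblk n ℓ x := by
      intro k hk
      simp only [Finset.mem_Ico] at hk
      simp only [sblk, Finset.mem_Icc]
      omega
    have t1 := telescope M j₁ i₁ i₂ hle
    have t2 := telescope M j₂ i₁ i₂ hle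
    have : ∑ k ∈ Finset.Ico i₁ i₂, dl M k j₁ = ∑ k ∈ Finset.Ico i₁ i₂, dl M k j₂ :=
      Finset.sum_congr rfl (fun k hk => hd k (hsub hk))
    omega
  intro i₁ hi₁ i₂ hi₂
  rcases le_total i₁ i₂ with h | h
  · exact key i₁ i₂ hi₁ hi₂ h
  · have := key i₂ i₁ hi₂ hi₁ h; omega

/-- blocks are nested child ⊆ parent -/
lemma blk_sub {ℓ x : ℕ} : blk n ℓ x ⊆ blk n (ℓ+1) (x/2) := by
  intro k hk
  simp only [blk, Finset.mem_Icc] at hk ⊢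
  have h1 : x/2*2 ≤ x := Nat.div_mul_le_self x 2
  have h2 : x ≤ 2*(x/2)+1 := by omega
  constructor
  · have : x/2*2^(ℓ+1) ≤ x*2^ℓ := by
      rw [pow_succ]
      calc x/2*(2^ℓ*2) = (x/2*2)*2^ℓ := by ring
      _ ≤ x*2^ℓ := by exact Nat.mul_le_mul_right _ h1
    omega
  · have : (x+1)*2^ℓ ≤ (x/2+1)*2^(ℓ+1) := by
      rw [pow_succ]
      calc (x+1)*2^ℓ ≤ ((x/2+1)*2)*2^ℓ := by
            apply Nat.mul_le_mul_right; omega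
      _ = (x/2+1)*(2^ℓ*2) := by ring
    omega

lemma sblk_sub {ℓ x : ℕ} : sblk n ℓ x ⊆ sblk n (ℓ+1) (x/2) := by
  intro k hk
  simp only [sblk, Finset.mem_Icc] at hk ⊢
  have h1 : x/2*2 ≤ x := Nat.div_mul_le_self x 2
  constructor
  · have : x/2*2^(ℓ+1) ≤ x*2^ℓ := by
      rw [pow_succ]
      calc x/2*(2^ℓ*2) = (x/2*2)*2^ℓ := by ring
      _ ≤ x*2^ℓ := Nat.mul_le_mul_right _ h1
    omega
  · have : (x+1)*2^ℓ ≤ (x/2+1)*2^(ℓ+1) := by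
      rw [pow_succ]
      calc (x+1)*2^ℓ ≤ ((x/2+1)*2)*2^ℓ := by
            apply Nat.mul_le_mul_right; omega
      _ = (x/2+1)*(2^ℓ*2) := by ring
    omega

lemma mem_xs_iff {ℓ x : ℕ} (hn : 1 ≤ n) :
    x ∈ xs n ℓ ↔ ∃ i, 1 ≤ i ∧ i ≤ n ∧ x = (i-1)/2^ℓ := by
  simp only [xs, Finset.mem_image, Finset.mem_Icc]
  constructor
  · rintro ⟨i, ⟨h1, h2⟩, rfl⟩; exact ⟨i, h1, h2, rfl⟩
  · rintro ⟨i, h1, h2, rfl⟩; exact ⟨i, ⟨h1, h2⟩, rfl⟩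

lemma blk_nonempty_of_xs {ℓ x : ℕ} (hn : 1 ≤ n) (hx : x ∈ xs n ℓ) :
    (blk n ℓ x).Nonempty := by
  rw [mem_xs_iff hn] at hx
  obtain ⟨i, h1, h2, rfl⟩ := hx
  rw [blk, Finset.nonempty_Icc]
  have h3 : (i-1)/2^ℓ*2^ℓ ≤ i - 1 := Nat.div_mul_le_self _ _
  have h4 : (0:ℕ) < 2^ℓ := Nat.pow_pos (by norm_num)
  have h5 : ((i-1)/2^ℓ+1)*2^ℓ = (i-1)/2^ℓ*2^ℓ + 2^ℓ := by ring
  omega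

lemma rp_spec {ℓ x j : ℕ} (hj : j ∈ Finset.Icc 1 n) :
    rp n M ℓ x j ∈ Finset.Icc 1 n ∧ sg n M ℓ x (rp n M ℓ x j) = sg n M ℓ x j := by
  have hne : ((Finset.Icc 1 n).filter (fun j' => sg n M ℓ x j' = sg n M ℓ x j)).Nonempty :=
    ⟨j, Finset.mem_filter.mpr ⟨hj, rfl⟩⟩
  rw [rp, repA]
  simp only [hne, dif_pos]
  have := Finset.min'_mem _ hne
  rw [Finset.mem_filter] at this
  exact this

/-- min over block shifts by constant -/
lemma nuF_shift {ℓ x j₁ j₂ : ℕ} {c : ℤ} (hne : (blk n ℓ x).Nonempty)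
    (hc : ∀ i ∈ blk n ℓ x, M i j₁ = M i j₂ + c) :
    nuF n M ℓ x j₁ = nuF n M ℓ x j₂ + c := by
  rw [nuF, nuF]
  simp only [hne, dif_pos]
  rw [← inf'_add_const (blk n ℓ x) hne (fun i => M i j₂) c]
  exact Finset.inf'_congr hne rfl hc

lemma inf'_sub_shift {ℓ x j₁ j₂ j : ℕ} {c : ℤ} (hne : (blk n ℓ x).Nonempty)
    (hc : ∀ i ∈ blk n ℓ x, M i j₁ = M i j₂ + c) :
    (blk n ℓ x).inf' hne (fun i => M i j₁ - M i j) =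
    (blk n ℓ x).inf' hne (fun i => M i j₂ - M i j) + c := by
  rw [← inf'_add_const (blk n ℓ x) hne (fun i => M i j₂ - M i j) c]
  apply Finset.inf'_congr hne rfl
  intro i hi
  have := hc i hi
  omega
end MathCore

section Graph
variable {n : ℕ} {M : ℕ → ℕ → ℤ}

lemma L_pos (hn : 2 ≤ n) : 1 ≤ Nat.clog 2 n := Nat.clog_pos (by norm_num) hn

lemma n_le_pow (hn : 2 ≤ n) : n ≤ 2 ^ Nat.clog 2 n := Nat.le_pow_clog (by norm_num) n

lemma pow_lt_2n (hn : 2 ≤ n) : 2 ^ Nat.clog 2 n ≤ 2 * n := by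
  have h1 : 2 ^ (Nat.clog 2 n - 1) < n := Nat.pow_pred_clog_lt_self (by norm_num) (by omega)
  have h2 : 1 ≤ Nat.clog 2 n := L_pos hn
  have h3 : 2 ^ Nat.clog 2 n = 2 * 2 ^ (Nat.clog 2 n - 1) := by
    rw [← pow_succ']
    congr 1
    omega
  omega

lemma blk_root (hn : 2 ≤ n) : blk n (Nat.clog 2 n) 0 = Finset.Icc 1 n := by
  rw [blk]
  congr 1
  · simp
  · simp only [one_mul, zero_mul, Nat.zero_add]
    have := n_le_pow hn
    omega

lemma blk_leaf {i : ℕ} (h1 : 1 ≤ i) (h2 : i ≤ n) : blk n 0 (i-1) = {i} := by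
  rw [blk]
  simp only [pow_zero, mul_one]
  have : i - 1 + 1 = i := by omega
  rw [this]
  have : min i n = i := by omega
  rw [this, Finset.Icc_self]

lemma zero_mem_xs (hn : 2 ≤ n) (ℓ : ℕ) : 0 ∈ xs n ℓ := by
  rw [mem_xs_iff (by omega)]
  exact ⟨1, le_refl _, by omega, by simp⟩

lemma leaf_mem_xs (hn : 2 ≤ n) {i : ℕ} (h1 : 1 ≤ i) (h2 : i ≤ n) : i - 1 ∈ xs n 0 := by
  rw [mem_xs_iff (by omega)]
  exact ⟨i, h1, h2, by simp⟩

lemma div_mem_xs (hn : 2 ≤ n) {i ℓ : ℕ} (h1 : 1 ≤ i) (h2 : i ≤ n) : (i-1)/2^ℓ ∈ xs n ℓ := by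
  rw [mem_xs_iff (by omega)]
  exact ⟨i, h1, h2, rfl⟩

lemma div_succ {i ℓ : ℕ} : (i-1)/2^ℓ/2 = (i-1)/2^(ℓ+1) := by
  rw [Nat.div_div_eq_div_mul, pow_succ]

/-- membership in VS for node vertices -/
lemma nV_mem_VS {ℓ x j : ℕ} (hℓ : ℓ ≤ Nat.clog 2 n) (hx : x ∈ xs n ℓ)
    (hj : j ∈ Finset.Icc 1 n) : nV ℓ x (rp n M ℓ x j) ∈ VS n M := by
  rw [VS]
  apply Finset.mem_union_right
  rw [Finset.mem_biUnion]
  refine ⟨ℓ, by simp [Finset.mem_range]; omega, ?_⟩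
  rw [Finset.mem_biUnion]
  refine ⟨x, hx, ?_⟩
  rw [nodesAt, Finset.mem_image]
  exact ⟨j, hj, rfl⟩

lemma rV_mem_VS {i : ℕ} (hi : i ∈ Finset.Icc 1 n) : rV i ∈ VS n M := by
  rw [VS]
  apply Finset.mem_union_left
  apply Finset.mem_union_left
  exact Finset.mem_image_of_mem _ hi

lemma cV_mem_VS {j : ℕ} (hj : j ∈ Finset.Icc 1 n) : cV j ∈ VS n M := by
  rw [VS]
  apply Finset.mem_union_left
  apply Finset.mem_union_right
  exact Finset.mem_image_of_mem _ hj

lemma edge_fst_VS (hn : 2 ≤ n) : ∀ e ∈ ES n M, e.1 ∈ VS n M := by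
  intro e he
  rw [ES, Finset.mem_union, Finset.mem_union] at he
  rcases he with (he | he) | he
  · rw [Een, Finset.mem_biUnion] at he
    obtain ⟨i, hi, he⟩ := he
    rw [Finset.mem_image] at he
    obtain ⟨j, hj, rfl⟩ := he
    exact rV_mem_VS hi
  · rw [Eup, Finset.mem_biUnion] at he
    obtain ⟨ℓ, hℓ, he⟩ := he
    rw [Finset.mem_biUnion] at he
    obtain ⟨x, hx, he⟩ := he
    rw [Finset.mem_image] at he
    obtain ⟨j, hj, rfl⟩ := he
    rw [Finset.mem_range] at hℓ
    exact nV_mem_VS (by omega) hx hj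
  · rw [Eex, Finset.mem_image] at he
    obtain ⟨j, hj, rfl⟩ := he
    exact nV_mem_VS (le_refl _) (zero_mem_xs hn _) hj

lemma edge_snd_VS (hn : 2 ≤ n) : ∀ e ∈ ES n M, e.2 ∈ VS n M := by
  intro e he
  rw [ES, Finset.mem_union, Finset.mem_union] at he
  rcases he with (he | he) | he
  · rw [Een, Finset.mem_biUnion] at he
    obtain ⟨i, hi, he⟩ := he
    rw [Finset.mem_image] at he
    obtain ⟨j, hj, rfl⟩ := he
    rw [Finset.mem_Icc] at hi
    exact nV_mem_VS (by omega) (leaf_mem_xs hn hi.1 hi.2) hj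
  · rw [Eup, Finset.mem_biUnion] at he
    obtain ⟨ℓ, hℓ, he⟩ := he
    rw [Finset.mem_biUnion] at he
    obtain ⟨x, hx, he⟩ := he
    rw [Finset.mem_image] at he
    obtain ⟨j, hj, rfl⟩ := he
    rw [Finset.mem_range] at hℓ
    rw [mem_xs_iff (by omega)] at hx
    obtain ⟨i, h1, h2, rfl⟩ := hx
    have : (i-1)/2^ℓ/2 = (i-1)/2^(ℓ+1) := div_succ
    rw [this]
    exact nV_mem_VS (by omega) (div_mem_xs hn h1 h2) hj
  · rw [Eex, Finset.mem_image] at he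
    obtain ⟨j, hj, rfl⟩ := he
    exact cV_mem_VS hj

/-- the emulator graph -/
def Hgraph (n : ℕ) (M : ℕ → ℕ → ℤ) (hn : 2 ≤ n) : WDigraph :=
  ⟨VS n M, ES n M, wt n M, edge_fst_VS hn, edge_snd_VS hn⟩

@[simp] lemma wt_en {i ℓ x ρ : ℕ} : wt n M (rV i, nV ℓ x ρ) = 0 := by
  simp [wt]

@[simp] lemma wt_up {ℓ x ρ ℓ' x' ρ' : ℕ} :
    wt n M (nV ℓ x ρ, nV ℓ' x' ρ') = nuF n M ℓ x ρ' - nuF n M ℓ' x' ρ' := by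
  simp [wt]

@[simp] lemma wt_ex {ℓ x ρ j : ℕ} :
    wt n M (nV ℓ x ρ, cV j) = nuF n M (Nat.clog 2 n) 0 j := by
  simp [wt]

/-- weights are nonnegative -/
lemma wt_nonneg (hn : 2 ≤ n) (hpos : ∀ i j, 1 ≤ i → i ≤ n → 1 ≤ j → j ≤ n → 0 ≤ M i j) :
    ∀ e ∈ ES n M, 0 ≤ wt n M e := by
  intro e he
  rw [ES, Finset.mem_union, Finset.mem_union] at he
  rcases he with (he | he) | he
  · rw [Een, Finset.mem_biUnion] at he
    obtain ⟨i, hi, he⟩ := he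
    rw [Finset.mem_image] at he
    obtain ⟨j, hj, rfl⟩ := he
    simp
  · rw [Eup, Finset.mem_biUnion] at he
    obtain ⟨ℓ, hℓ, he⟩ := he
    rw [Finset.mem_biUnion] at he
    obtain ⟨x, hx, he⟩ := he
    rw [Finset.mem_image] at he
    obtain ⟨j, hj, rfl⟩ := he
    rw [wt_up]
    have h1 : (blk n ℓ x).Nonempty := blk_nonempty_of_xs (by omega) hx
    have h2 : (blk n (ℓ+1) (x/2)).Nonempty := h1.mono blk_sub
    rw [nuF, nuF]
    simp only [h1, h2, dif_pos]
    have := inf'_subset_le h1 (blk_sub (x := x) (ℓ := ℓ))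
      (fun i' => M i' (rp n M (ℓ+1) (x/2) j))
    rw [sub_nonneg]
    exact this
  · rw [Eex, Finset.mem_image] at he
    obtain ⟨j, hj, rfl⟩ := he
    rw [wt_ex, nuF]
    have hne : (blk n (Nat.clog 2 n) 0).Nonempty := by
      rw [blk_root hn]
      exact ⟨1, by simp [Finset.mem_Icc]; omega⟩
    simp only [hne, dif_pos]
    apply Finset.le_inf'
    intro b hb
    rw [blk_root hn, Finset.mem_Icc] at hb
    rw [Finset.mem_Icc] at hj
    exact hpos b j hb.1 hb.2 hj.1 hj.2

/-- rank function for DAG -/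
def rk (n : ℕ) (u : ℕ) : ℕ :=
  if tg u = 0 then 0 else if tg u = 2 then d1 u + 1 else Nat.clog 2 n + 2

lemma rk_mono : ∀ e ∈ ES n M, rk n e.1 < rk n e.2 := by
  intro e he
  rw [ES, Finset.mem_union, Finset.mem_union] at he
  rcases he with (he | he) | he
  · rw [Een, Finset.mem_biUnion] at he
    obtain ⟨i, hi, he⟩ := he
    rw [Finset.mem_image] at he
    obtain ⟨j, hj, rfl⟩ := he
    simp [rk]
  · rw [Eup, Finset.mem_biUnion] at he
    obtain ⟨ℓ, hℓ, he⟩ := he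
    rw [Finset.mem_biUnion] at he
    obtain ⟨x, hx, he⟩ := he
    rw [Finset.mem_image] at he
    obtain ⟨j, hj, rfl⟩ := he
    simp [rk]
  · rw [Eex, Finset.mem_image] at he
    obtain ⟨j, hj, rfl⟩ := he
    simp only [rk, tg_nV, tg_cV, d1_nV]
    norm_num

lemma Hgraph_isDAG (hn : 2 ≤ n) : IsDAG (Hgraph n M hn) := by
  rintro ⟨v, l, hlen, ⟨⟨hne, hmem, hch⟩, hhead, hlast⟩⟩
  have := rank_chain (ES n M) (rk n) rk_mono l hch hlen v v hhead hlast
  omega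
end Graph


section Canon
variable {n : ℕ} {M : ℕ → ℕ → ℤ}

/-- the key shift: for ρ in the same class as j at node (ℓ,x), M(·,ρ) and M(·,j)
differ by a constant on the block -/
lemma class_const (hn : 2 ≤ n) (hUM : IsUnitMonge n n M) {ℓ x j₁ j₂ : ℕ}
    (h1 : j₁ ∈ Finset.Icc 1 n) (h2 : j₂ ∈ Finset.Icc 1 n)
    (hs : sg n M ℓ x j₁ = sg n M ℓ x j₂) {i₀ : ℕ} (hi₀ : i₀ ∈ blk n ℓ x) :
    ∀ i ∈ blk n ℓ x, M i j₁ = M i j₂ + (M i₀ j₁ - M i₀ j₂) := by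
  rw [Finset.mem_Icc] at h1 h2
  have hd := sig_eq_dl_eq hn hUM h1.1 h1.2 h2.1 h2.2 hs
  have := const_on_blk hd
  intro i hi
  have := this i hi i₀ hi₀
  omega

/-- canonical up-edge weight equals the telescoping difference evaluated at j -/
lemma wt_step (hn : 2 ≤ n) (hUM : IsUnitMonge n n M) {ℓ x j : ℕ}
    (hj : j ∈ Finset.Icc 1 n) (hx : (blk n ℓ x).Nonempty) :
    nuF n M ℓ x (rp n M (ℓ+1) (x/2) j) - nuF n M (ℓ+1) (x/2) (rp n M (ℓ+1) (x/2) j)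
      = nuF n M ℓ x j - nuF n M (ℓ+1) (x/2) j := by
  set ρ := rp n M (ℓ+1) (x/2) j with hρ
  obtain ⟨hρmem, hρsg⟩ := rp_spec (M := M) (ℓ := ℓ+1) (x := x/2) hj
  rw [← hρ] at hρmem hρsg
  obtain ⟨i₀, hi₀⟩ := hx
  have hi₀' : i₀ ∈ blk n (ℓ+1) (x/2) := blk_sub hi₀
  have hcp : ∀ i ∈ blk n (ℓ+1) (x/2), M i ρ = M i j + (M i₀ ρ - M i₀ j) :=
    class_const hn hUM hρmem hj hρsg hi₀'
  have hcc : ∀ i ∈ blk n ℓ x, M i ρ = M i j + (M i₀ ρ - M i₀ j) :=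
    fun i hi => hcp i (blk_sub hi)
  have e1 : nuF n M ℓ x ρ = nuF n M ℓ x j + (M i₀ ρ - M i₀ j) := nuF_shift ⟨i₀, hi₀⟩ hcc
  have e2 : nuF n M (ℓ+1) (x/2) ρ = nuF n M (ℓ+1) (x/2) j + (M i₀ ρ - M i₀ j) :=
    nuF_shift ⟨i₀, hi₀'⟩ hcp
  omega

lemma nuF_leaf {i j : ℕ} (h1 : 1 ≤ i) (h2 : i ≤ n) : nuF n M 0 (i-1) j = M i j := by
  rw [nuF]
  have hb : blk n 0 (i-1) = {i} := blk_leaf h1 h2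
  have hne : (blk n 0 (i-1)).Nonempty := by rw [hb]; exact ⟨i, Finset.mem_singleton_self i⟩
  simp only [hne, dif_pos]
  have : (blk n 0 (i-1)).inf' hne (fun i' => M i' j) = ({i} : Finset ℕ).inf'
      (by exact ⟨i, Finset.mem_singleton_self i⟩) (fun i' => M i' j) := by
    congr 1
  rw [this, Finset.inf'_singleton]

/-- the canonical path pieces are edges -/
lemma edge_en (hi : i ∈ Finset.Icc 1 n) (hj : j ∈ Finset.Icc 1 n) :
    (rV i, cvert n M i j 0) ∈ ES n M := by
  apply Finset.mem_union_left
  apply Finset.mem_union_left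
  rw [Een, Finset.mem_biUnion]
  refine ⟨i, hi, ?_⟩
  rw [Finset.mem_image]
  refine ⟨j, hj, ?_⟩
  rw [cvert]
  simp

lemma edge_up (hn : 2 ≤ n) {i j ℓ : ℕ} (hi : i ∈ Finset.Icc 1 n) (hj : j ∈ Finset.Icc 1 n)
    (hℓ : ℓ < Nat.clog 2 n) :
    (cvert n M i j ℓ, cvert n M i j (ℓ+1)) ∈ ES n M := by
  apply Finset.mem_union_left
  apply Finset.mem_union_right
  rw [Eup, Finset.mem_biUnion]
  refine ⟨ℓ, Finset.mem_range.mpr hℓ, ?_⟩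
  rw [Finset.mem_biUnion]
  rw [Finset.mem_Icc] at hi
  refine ⟨(i-1)/2^ℓ, div_mem_xs hn hi.1 hi.2, ?_⟩
  rw [Finset.mem_image]
  refine ⟨j, hj, ?_⟩
  rw [cvert, cvert, div_succ]

lemma edge_ex (hn : 2 ≤ n) {i j : ℕ} (hi : i ∈ Finset.Icc 1 n) (hj : j ∈ Finset.Icc 1 n) :
    (cvert n M i j (Nat.clog 2 n), cV j) ∈ ES n M := by
  apply Finset.mem_union_right
  rw [Eex, Finset.mem_image]
  refine ⟨j, hj, ?_⟩
  rw [cvert]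
  rw [Finset.mem_Icc] at hi
  have : (i-1)/2^(Nat.clog 2 n) = 0 := Nat.div_eq_of_lt (by have := n_le_pow hn; omega)
  rw [this]

/-- telescoping weight of the canonical tail -/
lemma tele (hn : 2 ≤ n) (hUM : IsUnitMonge n n M) {i j : ℕ}
    (hi : i ∈ Finset.Icc 1 n) (hj : j ∈ Finset.Icc 1 n) :
    ∀ k, k ≤ Nat.clog 2 n →
      List.Chain' (fun u v => (u, v) ∈ ES n M)
        ((List.range' (Nat.clog 2 n - k) (k+1) 1).map (cvert n M i j) ++ [cV j]) ∧
      walkWeight (wt n M)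
        ((List.range' (Nat.clog 2 n - k) (k+1) 1).map (cvert n M i j) ++ [cV j])
        = nuF n M (Nat.clog 2 n - k) ((i-1)/2^(Nat.clog 2 n - k)) j := by
  intro k
  induction k with
  | zero =>
    intro _
    simp only [Nat.sub_zero]
    have hr : List.range' (Nat.clog 2 n) (0+1) 1 = [Nat.clog 2 n] := by simp
    rw [hr]
    simp only [List.map_cons, List.map_nil, List.cons_append, List.nil_append]
    constructor
    · exact List.isChain_pair.mpr (edge_ex hn hi hj)
    · rw [walkWeight_cons_cons, walkWeight_single, cvert]
      have h0 : (i-1)/2^(Nat.clog 2 n) = 0 := by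
        rw [Finset.mem_Icc] at hi
        exact Nat.div_eq_of_lt (by have := n_le_pow hn; omega)
      rw [h0, wt_ex, add_zero]
  | succ k ih =>
    intro hk
    have hk' : k ≤ Nat.clog 2 n := by omega
    obtain ⟨ihc, ihw⟩ := ih hk'
    set t := Nat.clog 2 n - (k+1) with ht
    have htk : Nat.clog 2 n - k = t + 1 := by omega
    rw [htk] at ihc ihw
    have hrange : List.range' t (k+1+1) 1 = t :: List.range' (t+1) (k+1) 1 :=
      List.range'_succ
    rw [hrange]
    simp only [List.map_cons, List.cons_append]
    have hedge : (cvert n M i j t, cvert n M i j (t+1)) ∈ ES n M :=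
      edge_up hn hi hj (by omega)
    have hhead : ∃ b l', (List.range' (t+1) (k+1) 1).map (cvert n M i j) ++ [cV j]
        = b :: l' ∧ b = cvert n M i j (t+1) := by
      rw [List.range'_succ]
      simp only [List.map_cons, List.cons_append]
      exact ⟨_, _, rfl, rfl⟩
    obtain ⟨b, l', hbl, hb⟩ := hhead
    constructor
    · rw [hbl]; simp only [List.Chain', List.isChain_cons_cons]; rw [← hbl]
      exact ⟨hb ▸ hedge, ihc⟩
    · rw [hbl, walkWeight_cons_cons, ← hbl, ihw, hb]
      rw [cvert, cvert, ← div_succ (i := i) (ℓ := t)]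
      rw [wt_up]
      have hi' := hi
      rw [Finset.mem_Icc] at hi'
      have hxne : (blk n t ((i-1)/2^t)).Nonempty :=
        blk_nonempty_of_xs (by omega) (div_mem_xs hn hi'.1 hi'.2)
      have hws := wt_step hn hUM (ℓ := t) (x := (i-1)/2^t) hj hxne
      rw [hws]
      ring

/-- the canonical walk and its weight -/
lemma canon_walk (hn : 2 ≤ n) (hUM : IsUnitMonge n n M) {i j : ℕ}
    (hi : i ∈ Finset.Icc 1 n) (hj : j ∈ Finset.Icc 1 n) :
    List.Chain' (fun u v => (u, v) ∈ ES n M) (clist n M i j) ∧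
    walkWeight (wt n M) (clist n M i j) = M i j := by
  have h := tele hn hUM hi hj (Nat.clog 2 n) (le_refl _)
  rw [Nat.sub_self] at h
  obtain ⟨hc, hw⟩ := h
  have hrange : List.range' 0 (Nat.clog 2 n + 1) 1 = 0 :: List.range' 1 (Nat.clog 2 n) 1 :=
    List.range'_succ
  rw [clist]
  have hhead : ∃ b l', (List.range' 0 (Nat.clog 2 n + 1) 1).map (cvert n M i j) ++ [cV j]
      = b :: l' ∧ b = cvert n M i j 0 := by
    rw [hrange]
    simp only [List.map_cons, List.cons_append]
    exact ⟨_, _, rfl, rfl⟩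
  obtain ⟨b, l', hbl, hb⟩ := hhead
  constructor
  · rw [hbl]; simp only [List.Chain', List.isChain_cons_cons]; rw [← hbl]
    exact ⟨hb ▸ edge_en hi hj, hc⟩
  · rw [hbl, walkWeight_cons_cons, ← hbl, hw, hb]
    rw [Finset.mem_Icc] at hi
    simp only [pow_zero, Nat.div_one, wt_en, cvert]
    rw [pow_zero, Nat.div_one] at *
    rw [nuF_leaf hi.1 hi.2]
    ring
end Canon



section Canon2
variable {n : ℕ} {M : ℕ → ℕ → ℤ}

lemma clist_head {i j : ℕ} : (clist n M i j).head? = some (rV i) := rfl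

lemma clist_last {i j : ℕ} : (clist n M i j).getLast? = some (cV j) := by
  rw [clist]
  rw [show rV i :: ((List.range' 0 (Nat.clog 2 n + 1) 1).map (cvert n M i j) ++ [cV j])
    = (rV i :: (List.range' 0 (Nat.clog 2 n + 1) 1).map (cvert n M i j)) ++ [cV j] from rfl]
  exact List.getLast?_concat

lemma clist_length {i j : ℕ} : (clist n M i j).length = Nat.clog 2 n + 3 := by
  simp [clist]

lemma clist_nodup {i j : ℕ} : (clist n M i j).Nodup := by
  rw [clist]
  apply List.Nodup.cons
  · intro hmem
    rw [List.mem_append] at hmem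
    rcases hmem with h | h
    · rw [List.mem_map] at h
      obtain ⟨ℓ, _, h⟩ := h
      exact rV_ne_nV i ℓ _ _ h.symm
    · rw [List.mem_singleton] at h
      exact rV_ne_cV i j h
  · apply List.Nodup.append
    · apply List.Nodup.map
      · intro a b hab
        have := congrArg d1 hab
        simpa [cvert] using this
      · exact List.nodup_range'
    · exact List.nodup_singleton _
    · intro a ha hb
      rw [List.mem_singleton] at hb
      subst hb
      rw [List.mem_map] at ha
      obtain ⟨ℓ, _, h⟩ := ha
      exact cV_ne_nV j ℓ _ _ h.symm

lemma clist_mem_VS (hn : 2 ≤ n) {i j : ℕ} (hi : i ∈ Finset.Icc 1 n)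
    (hj : j ∈ Finset.Icc 1 n) : ∀ v ∈ clist n M i j, v ∈ VS n M := by
  intro v hv
  rw [clist, List.mem_cons, List.mem_append] at hv
  rcases hv with h | h | h
  · subst h; exact rV_mem_VS hi
  · rw [List.mem_map] at h
    obtain ⟨ℓ, hℓ, rfl⟩ := h
    rw [List.mem_range'_1] at hℓ
    rw [Finset.mem_Icc] at hi
    exact nV_mem_VS (by omega) (div_mem_xs hn hi.1 hi.2) hj
  · rw [List.mem_singleton] at h
    subst h
    exact cV_mem_VS hj

/-- Phi at source and target -/
lemma Phi_rV {i j : ℕ} : Phi n M j (rV i) = -(M i j) := by simp [Phi]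

lemma Phi_nV {ℓ x ρ j : ℕ} (hne : (blk n ℓ x).Nonempty) :
    Phi n M j (nV ℓ x ρ) =
      (blk n ℓ x).inf' hne (fun i => M i ρ - M i j) - nuF n M ℓ x ρ := by
  rw [Phi]
  simp only [tg_nV, d1_nV, d2_nV, d3_nV]
  rw [if_neg (by norm_num), if_neg (by norm_num), dif_pos hne]

lemma Phi_cV_eval {j j'' : ℕ} (hne : (Finset.Icc 1 n).Nonempty) :
    Phi n M j (cV j'') = (Finset.Icc 1 n).inf' hne (fun i => M i j'' - M i j) := by
  rw [Phi]
  simp only [tg_cV, d1_cV]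
  rw [if_neg (by norm_num), if_pos (by norm_num), dif_pos hne]

lemma Phi_cV_self (hn : 2 ≤ n) {j : ℕ} : Phi n M j (cV j) = 0 := by
  have hne : (Finset.Icc 1 n).Nonempty := ⟨1, by rw [Finset.mem_Icc]; omega⟩
  rw [Phi_cV_eval hne]
  rw [show (fun i => M i j - M i j) = (fun _ => (0:ℤ)) by funext i; ring]
  exact Finset.inf'_const _ _

/-- Phi inequality on every edge -/
lemma Phi_edge (hn : 2 ≤ n) (hUM : IsUnitMonge n n M) {j : ℕ} (hj : j ∈ Finset.Icc 1 n) :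
    ∀ e ∈ ES n M, Phi n M j e.2 ≤ Phi n M j e.1 + wt n M e := by
  intro e he
  rw [ES, Finset.mem_union, Finset.mem_union] at he
  rcases he with (he | he) | he
  · -- entry edge: equality
    rw [Een, Finset.mem_biUnion] at he
    obtain ⟨i, hi, he⟩ := he
    rw [Finset.mem_image] at he
    obtain ⟨j', hj', rfl⟩ := he
    rw [wt_en, add_zero, Phi_rV]
    have hi' := hi
    rw [Finset.mem_Icc] at hi'
    have hb : blk n 0 (i-1) = {i} := blk_leaf hi'.1 hi'.2
    have hne : (blk n 0 (i-1)).Nonempty := by rw [hb]; exact ⟨i, Finset.mem_singleton_self i⟩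
    rw [Phi_nV hne]
    set ρ := rp n M 0 (i-1) j'
    have e1 : (blk n 0 (i-1)).inf' hne (fun i' => M i' ρ - M i' j) = M i ρ - M i j := by
      rw [show (blk n 0 (i-1)).inf' hne (fun i' => M i' ρ - M i' j)
        = ({i} : Finset ℕ).inf' ⟨i, Finset.mem_singleton_self i⟩ (fun i' => M i' ρ - M i' j) by
          congr 1]
      exact Finset.inf'_singleton (f := fun i' => M i' ρ - M i' j) (b := i)
    have e2 : nuF n M 0 (i-1) ρ = M i ρ := nuF_leaf hi'.1 hi'.2
    rw [e1, e2]
    omega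
  · -- up edge
    rw [Eup, Finset.mem_biUnion] at he
    obtain ⟨ℓ, hℓ, he⟩ := he
    rw [Finset.mem_biUnion] at he
    obtain ⟨x, hx, he⟩ := he
    rw [Finset.mem_image] at he
    obtain ⟨j', hj', rfl⟩ := he
    rw [wt_up]
    set ρ := rp n M ℓ x j' with hρdef
    set ρ' := rp n M (ℓ+1) (x/2) j' with hρ'def
    have hcne : (blk n ℓ x).Nonempty := blk_nonempty_of_xs (by omega) hx
    have hpne : (blk n (ℓ+1) (x/2)).Nonempty := hcne.mono blk_sub
    obtain ⟨i₀, hi₀⟩ := hcne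
    have hi₀' : i₀ ∈ blk n (ℓ+1) (x/2) := blk_sub hi₀
    obtain ⟨hρm, hρs⟩ := rp_spec (M := M) (ℓ := ℓ) (x := x) hj'
    obtain ⟨hρ'm, hρ's⟩ := rp_spec (M := M) (ℓ := ℓ+1) (x := x/2) hj'
    rw [← hρdef] at hρm hρs
    rw [← hρ'def] at hρ'm hρ's
    -- ρ and ρ' agree as columns on blk ℓ x up to the same constant vs j'
    have hc1 : ∀ i' ∈ blk n ℓ x, M i' ρ = M i' j' + (M i₀ ρ - M i₀ j') :=
      fun i' hi' => class_const hn hUM hρm hj' hρs hi₀ i' hi'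
    have hc2p : ∀ i' ∈ blk n (ℓ+1) (x/2), M i' ρ' = M i' j' + (M i₀ ρ' - M i₀ j') :=
      class_const hn hUM hρ'm hj' hρ's hi₀'
    have hc2 : ∀ i' ∈ blk n ℓ x, M i' ρ' = M i' j' + (M i₀ ρ' - M i₀ j') :=
      fun i' hi' => hc2p i' (blk_sub hi')
    -- so M · ρ = M · ρ' + c on blk ℓ x with c := M i₀ ρ - M i₀ ρ'
    have hc : ∀ i' ∈ blk n ℓ x, M i' ρ = M i' ρ' + (M i₀ ρ - M i₀ ρ') := by
      intro i' hi'
      have := hc1 i' hi'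
      have := hc2 i' hi'
      omega
    rw [Phi_nV (j := j) (ρ := ρ) (⟨i₀, hi₀⟩ : (blk n ℓ x).Nonempty),
       Phi_nV (j := j) (ρ := ρ') hpne]
    -- rewrite Phi u parts
    have e1 : (blk n ℓ x).inf' ⟨i₀, hi₀⟩ (fun i' => M i' ρ - M i' j)
        = (blk n ℓ x).inf' ⟨i₀, hi₀⟩ (fun i' => M i' ρ' - M i' j) + (M i₀ ρ - M i₀ ρ') :=
      inf'_sub_shift ⟨i₀, hi₀⟩ hc
    have e2 : nuF n M ℓ x ρ = nuF n M ℓ x ρ' + (M i₀ ρ - M i₀ ρ') :=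
      nuF_shift ⟨i₀, hi₀⟩ hc
    have e3 : (blk n (ℓ+1) (x/2)).inf' hpne (fun i' => M i' ρ' - M i' j)
        ≤ (blk n ℓ x).inf' ⟨i₀, hi₀⟩ (fun i' => M i' ρ' - M i' j) :=
      inf'_subset_le ⟨i₀, hi₀⟩ blk_sub _
    rw [e1, e2]
    omega
  · -- exit edge: equality
    rw [Eex, Finset.mem_image] at he
    obtain ⟨j'', hj'', rfl⟩ := he
    rw [wt_ex]
    simp only [d1_cV]
    set L := Nat.clog 2 n with hL
    set ρ := rp n M L 0 j'' with hρdef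
    have hbr : blk n L 0 = Finset.Icc 1 n := blk_root hn
    have hne : (blk n L 0).Nonempty := by
      rw [hbr]; exact ⟨1, by rw [Finset.mem_Icc]; omega⟩
    have hne' : (Finset.Icc 1 n).Nonempty := ⟨1, by rw [Finset.mem_Icc]; omega⟩
    obtain ⟨hρm, hρs⟩ := rp_spec (M := M) (ℓ := L) (x := 0) hj''
    rw [← hρdef] at hρm hρs
    obtain ⟨i₀, hi₀⟩ := hne
    have hc : ∀ i' ∈ blk n L 0, M i' ρ = M i' j'' + (M i₀ ρ - M i₀ j'') :=
      class_const hn hUM hρm hj'' hρs hi₀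
    rw [Phi_nV (j := j) (ρ := ρ) (⟨i₀, hi₀⟩ : (blk n L 0).Nonempty), Phi_cV_eval hne']
    have e1 : (blk n L 0).inf' ⟨i₀, hi₀⟩ (fun i' => M i' ρ - M i' j)
        = (blk n L 0).inf' ⟨i₀, hi₀⟩ (fun i' => M i' j'' - M i' j) + (M i₀ ρ - M i₀ j'') :=
      inf'_sub_shift ⟨i₀, hi₀⟩ hc
    have e2 : nuF n M L 0 ρ = nuF n M L 0 j'' + (M i₀ ρ - M i₀ j'') :=
      nuF_shift ⟨i₀, hi₀⟩ hc
    have e3 : (Finset.Icc 1 n).inf' hne' (fun i' => M i' j'' - M i' j)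
        = (blk n L 0).inf' ⟨i₀, hi₀⟩ (fun i' => M i' j'' - M i' j) := by
      congr 1
      rw [hbr]
    rw [e1, e2, e3]
    omega
end Canon2





section Size
variable {n : ℕ} {M : ℕ → ℕ → ℤ}

lemma card_image_sg (hn : 2 ≤ n) (hUM : IsUnitMonge n n M) (ℓ x : ℕ) :
    ((Finset.Icc 1 n).image (sg n M ℓ x)).card ≤ 2^(ℓ+1) + 1 := by
  have hsub : (Finset.Icc 1 n).image (sg n M ℓ x) ⊆
      Finset.Icc (-(2^ℓ:ℤ)) (2^ℓ) := by
    rw [Finset.image_subset_iff]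
    intro j hj
    rw [Finset.mem_Icc] at hj ⊢
    have := sg_bound hn hUM (ℓ := ℓ) (x := x) hj.1 hj.2
    rw [abs_le] at this
    exact this
  calc ((Finset.Icc 1 n).image (sg n M ℓ x)).card ≤ (Finset.Icc (-(2^ℓ:ℤ)) (2^ℓ)).card :=
        Finset.card_le_card hsub
  _ = 2^(ℓ+1) + 1 := by
      rw [Int.card_Icc]
      have h1 : (2:ℤ)^ℓ + 1 - -(2:ℤ)^ℓ = 2*2^ℓ + 1 := by ring
      rw [h1]
      have h2 : ((2:ℤ))^ℓ = ((2^ℓ : ℕ) : ℤ) := by push_cast; ring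
      rw [h2]
      have h3 : (2:ℕ)^(ℓ+1) = 2*2^ℓ := by ring
      omega

lemma card_nodesAt (hn : 2 ≤ n) (hUM : IsUnitMonge n n M) (ℓ x : ℕ) :
    (nodesAt n M ℓ x).card ≤ 2^(ℓ+1) + 1 := by
  refine le_trans ?_ (card_image_sg hn hUM ℓ x)
  apply card_image_factor
  intro a _ b _ hab
  simp only [rp, hab]

lemma card_xs (hn : 2 ≤ n) (ℓ : ℕ) : (xs n ℓ).card ≤ (n-1)/2^ℓ + 1 := by
  have hsub : xs n ℓ ⊆ Finset.range ((n-1)/2^ℓ + 1) := by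
    intro x hx
    rw [mem_xs_iff (by omega)] at hx
    obtain ⟨i, h1, h2, rfl⟩ := hx
    rw [Finset.mem_range]
    have := Nat.div_le_div_right (c := 2^ℓ) (show i-1 ≤ n-1 by omega)
    omega
  calc (xs n ℓ).card ≤ _ := Finset.card_le_card hsub
  _ = (n-1)/2^ℓ + 1 := Finset.card_range _

lemma pow_le_4n (hn : 2 ≤ n) {ℓ : ℕ} (hℓ : ℓ ≤ Nat.clog 2 n) : 2^(ℓ+1) ≤ 4*n := by
  have h1 : 2^(ℓ+1) ≤ 2^(Nat.clog 2 n + 1) := Nat.pow_le_pow_right (by norm_num) (by omega)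
  have h2 := pow_lt_2n hn
  rw [pow_succ] at h1
  omega

lemma div_mul_le (a b : ℕ) : a/2^b * 2^b ≤ a := Nat.div_mul_le_self _ _

lemma card_VS (hn : 2 ≤ n) (hUM : IsUnitMonge n n M) :
    (VS n M).card ≤ 10*n*(Nat.clog 2 n + 1) := by
  set L := Nat.clog 2 n with hL
  have h1 : ((Finset.Icc 1 n).image rV).card ≤ n := by
    calc _ ≤ (Finset.Icc 1 n).card := Finset.card_image_le
    _ = n := by rw [Nat.card_Icc]; omega
  have h2 : ((Finset.Icc 1 n).image cV).card ≤ n := by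
    calc _ ≤ (Finset.Icc 1 n).card := Finset.card_image_le
    _ = n := by rw [Nat.card_Icc]; omega
  have h3 : ((Finset.range (L+1)).biUnion
      (fun ℓ => (xs n ℓ).biUnion (fun x => nodesAt n M ℓ x))).card ≤ 8*n*(L+1) := by
    calc _ ≤ ∑ ℓ ∈ Finset.range (L+1), ((xs n ℓ).biUnion (fun x => nodesAt n M ℓ x)).card :=
          Finset.card_biUnion_le
    _ ≤ ∑ _ℓ ∈ Finset.range (L+1), 8*n := by
        apply Finset.sum_le_sum
        intro ℓ hℓ
        rw [Finset.mem_range] at hℓ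
        calc ((xs n ℓ).biUnion (fun x => nodesAt n M ℓ x)).card
            ≤ ∑ x ∈ xs n ℓ, (nodesAt n M ℓ x).card := Finset.card_biUnion_le
        _ ≤ ∑ _x ∈ xs n ℓ, (2^(ℓ+1)+1) :=
            Finset.sum_le_sum (fun x _ => card_nodesAt hn hUM ℓ x)
        _ = (xs n ℓ).card * (2^(ℓ+1)+1) := by rw [Finset.sum_const, smul_eq_mul]
        _ ≤ ((n-1)/2^ℓ + 1) * (2^(ℓ+1)+1) :=
            Nat.mul_le_mul_right _ (card_xs hn ℓ)
        _ ≤ 8*n := by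
            have ha : (n-1)/2^ℓ * 2^(ℓ+1) ≤ 2*n := by
              rw [pow_succ]
              have := div_mul_le (n-1) ℓ
              calc (n-1)/2^ℓ * (2^ℓ*2) = ((n-1)/2^ℓ * 2^ℓ)*2 := by ring
              _ ≤ (n-1)*2 := by omega
              _ ≤ 2*n := by omega
            have hb : (n-1)/2^ℓ ≤ n := le_trans (Nat.div_le_self _ _) (by omega)
            have hc : 2^(ℓ+1) ≤ 4*n := pow_le_4n hn (by omega)
            calc ((n-1)/2^ℓ + 1) * (2^(ℓ+1)+1)
                = (n-1)/2^ℓ * 2^(ℓ+1) + (n-1)/2^ℓ + 2^(ℓ+1) + 1 := by ring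
            _ ≤ 8*n := by omega
    _ = 8*n*(L+1) := by rw [Finset.sum_const, Finset.card_range, smul_eq_mul]; ring
  rw [VS]
  calc _ ≤ (((Finset.Icc 1 n).image rV) ∪ ((Finset.Icc 1 n).image cV)).card
        + ((Finset.range (L+1)).biUnion
            (fun ℓ => (xs n ℓ).biUnion (fun x => nodesAt n M ℓ x))).card :=
        Finset.card_union_le _ _
  _ ≤ (((Finset.Icc 1 n).image rV).card + ((Finset.Icc 1 n).image cV).card)
        + 8*n*(L+1) := by
        have := Finset.card_union_le ((Finset.Icc 1 n).image rV) ((Finset.Icc 1 n).image cV)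
        omega
  _ ≤ 10*n*(L+1) := by
      have e9 : 10*n*(L+1) = 2*(n*(L+1)) + 8*(n*(L+1)) := by ring
      have e7 : 8*n*(L+1) = 8*(n*(L+1)) := by ring
      have hX : n ≤ n*(L+1) := Nat.le_mul_of_pos_right n (by omega)
      omega

lemma card_ES (hn : 2 ≤ n) (hUM : IsUnitMonge n n M) :
    (ES n M).card ≤ 18*n*(Nat.clog 2 n + 1) := by
  set L := Nat.clog 2 n with hL
  have hEn : (Een n M).card ≤ 3*n := by
    calc (Een n M).card ≤ ∑ i ∈ Finset.Icc 1 n,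
        ((Finset.Icc 1 n).image (fun j => (rV i, nV 0 (i-1) (rp n M 0 (i-1) j)))).card :=
        Finset.card_biUnion_le
    _ ≤ ∑ _i ∈ Finset.Icc 1 n, 3 := by
        apply Finset.sum_le_sum
        intro i _
        have := card_image_sg hn hUM 0 (i-1)
        have hf : ((Finset.Icc 1 n).image
            (fun j => (rV i, nV 0 (i-1) (rp n M 0 (i-1) j)))).card ≤
            ((Finset.Icc 1 n).image (sg n M 0 (i-1))).card := by
          apply card_image_factor
          intro a _ b _ hab
          simp only [rp, hab]
        omega
    _ ≤ 3*n := by rw [Finset.sum_const, Nat.card_Icc, smul_eq_mul]; omega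
  have hUp : (Eup n M).card ≤ 14*n*L := by
    calc (Eup n M).card ≤ ∑ ℓ ∈ Finset.range L, ((xs n ℓ).biUnion (fun x =>
        (Finset.Icc 1 n).image (fun j =>
          (nV ℓ x (rp n M ℓ x j), nV (ℓ+1) (x/2) (rp n M (ℓ+1) (x/2) j))))).card :=
        Finset.card_biUnion_le
    _ ≤ ∑ _ℓ ∈ Finset.range L, 14*n := by
        apply Finset.sum_le_sum
        intro ℓ hℓ
        rw [Finset.mem_range] at hℓ
        calc _ ≤ ∑ x ∈ xs n ℓ, ((Finset.Icc 1 n).image (fun j =>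
              (nV ℓ x (rp n M ℓ x j), nV (ℓ+1) (x/2) (rp n M (ℓ+1) (x/2) j)))).card :=
              Finset.card_biUnion_le
        _ ≤ ∑ _x ∈ xs n ℓ, (2^(ℓ+2)+1) := by
            apply Finset.sum_le_sum
            intro x _
            refine le_trans ?_ (card_image_sg hn hUM (ℓ+1) (x/2))
            apply card_image_factor
            intro a ha b hb hab
            have hsga : sg n M ℓ x a = sg n M ℓ x b := by
              have hd := sig_eq_dl_eq hn hUM
                (Finset.mem_Icc.mp ha).1 (Finset.mem_Icc.mp ha).2
                (Finset.mem_Icc.mp hb).1 (Finset.mem_Icc.mp hb).2 hab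
              rw [sg, sg]
              exact Finset.sum_congr rfl (fun k hk => hd k (sblk_sub hk))
            simp only [rp, hab, hsga]
        _ = (xs n ℓ).card * (2^(ℓ+2)+1) := by rw [Finset.sum_const, smul_eq_mul]
        _ ≤ ((n-1)/2^ℓ + 1) * (2^(ℓ+2)+1) := Nat.mul_le_mul_right _ (card_xs hn ℓ)
        _ ≤ 14*n := by
            have ha : (n-1)/2^ℓ * 2^(ℓ+2) ≤ 4*n := by
              have h4 : (2:ℕ)^(ℓ+2) = 2^ℓ*4 := by ring
              have := div_mul_le (n-1) ℓ
              calc (n-1)/2^ℓ * 2^(ℓ+2) = ((n-1)/2^ℓ * 2^ℓ)*4 := by rw [h4]; ring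
              _ ≤ (n-1)*4 := by omega
              _ ≤ 4*n := by omega
            have hb : (n-1)/2^ℓ ≤ n := le_trans (Nat.div_le_self _ _) (by omega)
            have hc : 2^(ℓ+2) ≤ 4*n := by
              have : ℓ + 1 ≤ L := by omega
              have := pow_le_4n hn (show ℓ+1 ≤ L by omega)
              calc (2:ℕ)^(ℓ+2) = 2^((ℓ+1)+1) := by ring_nf
              _ ≤ 4*n := pow_le_4n hn (by omega)
            calc ((n-1)/2^ℓ + 1) * (2^(ℓ+2)+1)
                = (n-1)/2^ℓ * 2^(ℓ+2) + (n-1)/2^ℓ + 2^(ℓ+2) + 1 := by ring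
            _ ≤ 14*n := by omega
    _ = 14*n*L := by rw [Finset.sum_const, Finset.card_range, smul_eq_mul]; ring
  have hEx : (Eex n M).card ≤ n := by
    calc (Eex n M).card ≤ (Finset.Icc 1 n).card := Finset.card_image_le
    _ = n := by rw [Nat.card_Icc]; omega
  rw [ES]
  calc (Een n M ∪ Eup n M ∪ Eex n M).card
      ≤ (Een n M ∪ Eup n M).card + (Eex n M).card := Finset.card_union_le _ _
  _ ≤ ((Een n M).card + (Eup n M).card) + (Eex n M).card := by
      have := Finset.card_union_le (Een n M) (Eup n M)
      omega
  _ ≤ 18*n*(L+1) := by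
      have e2 : n*(L+1) = n*L + n := by ring
      have e15 : 18*n*(L+1) = 18*(n*L) + 18*n := by ring
      have e10 : 14*n*L = 14*(n*L) := by ring
      omega

lemma size_bound (hn : 2 ≤ n) (hUM : IsUnitMonge n n M) :
    (Hgraph n M hn).size ≤ 28*n*(Nat.clog 2 n + 1) := by
  have h1 := card_VS hn hUM
  have h2 := card_ES hn hUM
  rw [WDigraph.size]
  have : (Hgraph n M hn).V = VS n M := rfl
  have : (Hgraph n M hn).E = ES n M := rfl
  calc (Hgraph n M hn).V.card + (Hgraph n M hn).E.card
      = (VS n M).card + (ES n M).card := rfl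
  _ ≤ 28*n*(Nat.clog 2 n + 1) := by
      have e : 28*n*(Nat.clog 2 n + 1)
          = 10*n*(Nat.clog 2 n + 1) + 18*n*(Nat.clog 2 n + 1) := by ring
      omega
end Size

end NUME

theorem nonneg_unitMonge_emulator :
    ∃ C : ℝ, 0 < C ∧
      ∀ (n : ℕ) (M : ℕ → ℕ → ℤ), 2 ≤ n → IsUnitMonge n n M →
        (∀ i j, 1 ≤ i → i ≤ n → 1 ≤ j → j ≤ n → 0 ≤ M i j) →
        ∃ (H : WDigraph) (r c : ℕ → ℕ),
          IsDAG H ∧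
          (∀ e ∈ H.E, 0 ≤ H.w e) ∧
          ((H.size : ℝ) ≤ C * (n : ℝ) * (Real.logb 2 (n : ℝ) + 1)) ∧
          (∀ x, 1 ≤ x → x ≤ n → r x ∈ H.V) ∧
          (∀ y, 1 ≤ y → y ≤ n → c y ∈ H.V) ∧
          (∀ x x', 1 ≤ x → x ≤ n → 1 ≤ x' → x' ≤ n → r x = r x' → x = x') ∧
          (∀ y y', 1 ≤ y → y ≤ n → 1 ≤ y' → y' ≤ n → c y = c y' → y = y') ∧
          (∀ x y, 1 ≤ x → x ≤ n → 1 ≤ y → y ≤ n → r x ≠ c y) ∧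
          (∀ i j, 1 ≤ i → i ≤ n → 1 ≤ j → j ≤ n →
            HasDistW H H.w (r i) (c j) (M i j)) := by
  classical
  refine ⟨56, by norm_num, ?_⟩
  intro n M hn hUM hpos
  refine ⟨NUME.Hgraph n M hn, NUME.rV, NUME.cV, ?_, ?_, ?_, ?_, ?_, ?_, ?_, ?_, ?_⟩
  · exact NUME.Hgraph_isDAG hn
  · exact NUME.wt_nonneg hn hpos
  · -- size bound
    have hsz : (NUME.Hgraph n M hn).size ≤ 28*n*(Nat.clog 2 n + 1) :=
      NUME.size_bound hn hUM
    set L := Nat.clog 2 n with hLdef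
    have hL1 : 1 ≤ L := NUME.L_pos hn
    have hpow : 2 ^ (L - 1) < n := Nat.pow_pred_clog_lt_self (by norm_num) (by omega)
    have hlogb : ((L:ℝ) - 1) ≤ Real.logb 2 n := by
      have hcast : ((2:ℝ)) ^ (L-1) ≤ (n:ℝ) := by
        have : ((2^(L-1) : ℕ) : ℝ) ≤ (n:ℝ) := by exact_mod_cast hpow.le
        push_cast at this
        exact this
      have h1 : Real.logb 2 ((2:ℝ)^(L-1)) ≤ Real.logb 2 n := by
        apply Real.logb_le_logb_of_le (by norm_num) (by positivity) hcast
      have h2 : Real.logb 2 ((2:ℝ)^(L-1)) = ((L-1 : ℕ) : ℝ) := by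
        rw [Real.logb_pow]
        simp [Real.logb_self_eq_one]
      rw [h2] at h1
      have h3 : ((L-1 : ℕ) : ℝ) = (L:ℝ) - 1 := by
        have : (1:ℕ) ≤ L := hL1
        push_cast [Nat.cast_sub this]
        ring
      rw [h3] at h1
      exact h1
    have hlognn : 0 ≤ Real.logb 2 n := Real.logb_nonneg (by norm_num) (by exact_mod_cast (by omega : 1 ≤ n))
    have key : ((L:ℝ) + 1) ≤ 2 * (Real.logb 2 n + 1) := by linarith
    have hsz' : ((NUME.Hgraph n M hn).size : ℝ) ≤ 28*(n:ℝ)*((L:ℝ)+1) := by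
      have := hsz
      have hcast : ((28*n*(L+1) : ℕ) : ℝ) = 28*(n:ℝ)*((L:ℝ)+1) := by push_cast; ring
      calc ((NUME.Hgraph n M hn).size : ℝ) ≤ ((28*n*(L+1) : ℕ) : ℝ) := by exact_mod_cast this
      _ = _ := hcast
    have hn0 : (0:ℝ) ≤ (n:ℝ) := by positivity
    calc ((NUME.Hgraph n M hn).size : ℝ) ≤ 28*(n:ℝ)*((L:ℝ)+1) := hsz'
    _ ≤ 28*(n:ℝ)*(2*(Real.logb 2 n + 1)) := by
        apply mul_le_mul_of_nonneg_left key (by positivity)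
    _ = 56 * (n:ℝ) * (Real.logb 2 n + 1) := by ring
  · intro x h1 h2
    exact NUME.rV_mem_VS (Finset.mem_Icc.mpr ⟨h1, h2⟩)
  · intro y h1 h2
    exact NUME.cV_mem_VS (Finset.mem_Icc.mpr ⟨h1, h2⟩)
  · intro x x' _ _ _ _ h
    exact NUME.rV_inj h
  · intro y y' _ _ _ _ h
    exact NUME.cV_inj h
  · intro x y _ _ _ _
    exact NUME.rV_ne_cV x y
  · intro i j h1 h2 h3 h4
    have hi : i ∈ Finset.Icc 1 n := Finset.mem_Icc.mpr ⟨h1, h2⟩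
    have hj : j ∈ Finset.Icc 1 n := Finset.mem_Icc.mpr ⟨h3, h4⟩
    obtain ⟨hchain, hweight⟩ := NUME.canon_walk hn hUM hi hj
    constructor
    · refine ⟨NUME.clist n M i j, ⟨⟨⟨?_, ?_, ?_⟩, ?_, ?_⟩, ?_⟩, ?_⟩
      · simp [NUME.clist]
      · exact NUME.clist_mem_VS hn hi hj
      · exact hchain
      · exact NUME.clist_head
      · exact NUME.clist_last
      · exact NUME.clist_nodup
      · exact hweight
    · rintro l ⟨⟨⟨hlne, hlmem, hlch⟩, hlh, hll⟩, hlnd⟩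
      have := NUME.phi_chain (NUME.ES n M) (NUME.wt n M) (NUME.Phi n M j)
        (NUME.Phi_edge hn hUM hj) l hlch _ _ hlh hll
      rw [NUME.Phi_cV_self hn, NUME.Phi_rV] at this
      have hww : walkWeight (NUME.Hgraph n M hn).w l = walkWeight (NUME.wt n M) l := rfl
      rw [hww]
      omega
end

section
/- There is an absolute constant C such that for every n ≥ 2 and every lower triangular unit-Monge matrix M of order n there exists a weighted digraph H that is a DAG, has integer edge weights, has size at most C·n·(log₂ n + 1), and contains 2n distinct distinguished vertices r[1],…,r[n], c[1],…,c[n], such that: for all 1 ≤ j ≤ i ≤ n a directed path from r[i] to c[j] exists and d_H(r[i], c[j]) = M[i,j], while for all 1 ≤ i < j ≤ n there is no directed path from r[i] to c[j] in H. -/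
/-- A lower triangular unit-Monge matrix of order `n` (1-based indexing). -/
def IsLowerTriUnitMonge (n : ℕ) (M : ℕ → ℕ → ℤ) : Prop :=
  (∀ i j, 1 ≤ j → j ≤ i → i + 1 ≤ n →
    M (i + 1) j - M i j = -1 ∨ M (i + 1) j - M i j = 0 ∨ M (i + 1) j - M i j = 1) ∧
  (∀ i j, 1 ≤ j → j < i → i + 1 ≤ n →
    M (i + 1) j - M i j ≤ M (i + 1) (j + 1) - M i (j + 1))

open Finset

namespace Emu

noncomputable section

variable (n : ℕ) (M : ℕ → ℕ → ℤ)

/-- depth parameter -/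
def L : ℕ := Nat.log 2 n + 1

/-- extended row-difference function -/
def dhat (k x : ℕ) : ℤ := M (k+1) (min x k) - M k (min x k)

/-- index of dyadic interval of level ℓ containing x -/
def qIdx (x ℓ : ℕ) : ℕ := (x - 1) / 2^ℓ

/-- copy ("touch") predicate: node (ℓ,q) is touched at step v -/
def P (v ℓ q : ℕ) : Prop :=
  1 ≤ v ∧ (qIdx v ℓ = q ∨ (2 ≤ v ∧ ∃ x, 1 ≤ x ∧ qIdx x ℓ = q ∧ qIdx (x+1) ℓ = q ∧
    dhat M (v-1) x ≠ dhat M (v-1) (x+1)))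

/-- creation step of the live version of node (ℓ,q) at time i -/
noncomputable def cs (i ℓ q : ℕ) : ℕ :=
  @Nat.findGreatest (fun v => P M v ℓ q) (Classical.decPred _) i

def rE (i : ℕ) : ℕ := 3*i
def cE (j : ℕ) : ℕ := 3*j+1
def e3 (v ℓ q : ℕ) : ℕ := 3*((v*(L n + 1)+ℓ)*2^(L n)+q)+2

/-- decode an internal vertex -/
def dec3 (t : ℕ) : ℕ × ℕ × ℕ :=
  ((t/3)/2^(L n)/(L n + 1), ((t/3)/2^(L n)) % (L n + 1), (t/3) % 2^(L n))

lemma qIdx_mono {x y : ℕ} (ℓ : ℕ) (h : x ≤ y) : qIdx x ℓ ≤ qIdx y ℓ :=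
  Nat.div_le_div_right (Nat.sub_le_sub_right h 1)

lemma qIdx_zero (x : ℕ) : qIdx x 0 = x - 1 := by simp [qIdx]

lemma qIdx_succ (x ℓ : ℕ) : qIdx x (ℓ+1) = qIdx x ℓ / 2 := by
  simp [qIdx, pow_succ, Nat.div_div_eq_div_mul]

lemma qIdx_left (q ℓ : ℕ) : qIdx (q*2^ℓ + 1) ℓ = q := by
  have h2 : (0:ℕ) < 2^ℓ := Nat.pow_pos (by norm_num)
  simp [qIdx, Nat.mul_div_cancel _ h2]

lemma qIdx_left_mul (q ℓ : ℕ) : qIdx (q*2^ℓ + 1) ℓ = q := qIdx_left q ℓ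

/-- membership bounds from qIdx -/
lemma qIdx_ge {x ℓ q : ℕ} (h : qIdx x ℓ = q) : q * 2^ℓ ≤ x - 1 := by
  subst h; exact Nat.div_mul_le_self _ _

lemma qIdx_lt {x ℓ q : ℕ} (h : qIdx x ℓ = q) : x - 1 < (q+1) * 2^ℓ := by
  subst h
  have h2 : (0:ℕ) < 2^ℓ := Nat.pow_pos (n := ℓ) (by norm_num)
  exact (Nat.div_lt_iff_lt_mul h2).mp (Nat.lt_succ_self _)

lemma qIdx_eq_of_between {a b x ℓ q : ℕ} (ha : qIdx a ℓ = q) (hb : qIdx b ℓ = q)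
    (h1 : a ≤ x) (h2 : x ≤ b) : qIdx x ℓ = q :=
  le_antisymm (ha ▸ (hb ▸ qIdx_mono ℓ h2 : qIdx x ℓ ≤ q)) (ha ▸ qIdx_mono ℓ h1)

/-- a function with no jump inside a dyadic interval is constant there -/
lemma constOn {f : ℕ → ℤ} {ℓ q : ℕ}
    (h : ∀ x, 1 ≤ x → qIdx x ℓ = q → qIdx (x+1) ℓ = q → f x = f (x+1))
    {a b : ℕ} (h1 : 1 ≤ a) (ha : qIdx a ℓ = q) (hb : qIdx b ℓ = q) (hab : a ≤ b) :
    f a = f b := by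
  induction b, hab using Nat.le_induction with
  | base => rfl
  | succ b hab ih =>
      have hqb : qIdx b ℓ = q := qIdx_eq_of_between ha hb hab (Nat.le_succ b)
      exact (ih hqb).trans (h b (le_trans h1 hab) hqb hb)

lemma telescope (f : ℕ → ℤ) {a b : ℕ} (h : a ≤ b) :
    ∑ x ∈ Ico a b, (f (x+1) - f x) = f b - f a := by
  induction b, h using Nat.le_induction with
  | base => simp
  | succ b hab ih => rw [Finset.sum_Ico_succ_top hab, ih]; ring

lemma rE_mod (i : ℕ) : rE i % 3 = 0 := by simp [rE, Nat.mul_mod_right]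
lemma cE_mod (j : ℕ) : cE j % 3 = 1 := by simp [cE, Nat.add_mod, Nat.mul_mod_right]
lemma e3_mod (v ℓ q : ℕ) : e3 n v ℓ q % 3 = 2 := by simp [e3, Nat.add_mod, Nat.mul_mod_right]
lemma rE_div (i : ℕ) : rE i / 3 = i := by simp [rE]
lemma cE_div (j : ℕ) : cE j / 3 = j := by simp [cE]; omega

lemma dec3_e3 {ℓ q : ℕ} (v : ℕ) (hℓ : ℓ ≤ L n) (hq : q < 2^(L n)) :
    dec3 n (e3 n v ℓ q) = (v, ℓ, q) := by
  have h3 : (3*((v*(L n + 1)+ℓ)*2^(L n)+q)+2) / 3 = (v*(L n + 1)+ℓ)*2^(L n)+q := by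
    omega
  have h2 : (0:ℕ) < 2^(L n) := Nat.pow_pos (by norm_num)
  have hd : ((v*(L n + 1)+ℓ)*2^(L n)+q) / 2^(L n) = v*(L n + 1)+ℓ := by
    rw [Nat.add_comm, Nat.add_mul_div_right _ _ h2, Nat.div_eq_of_lt hq]; omega
  have hm : ((v*(L n + 1)+ℓ)*2^(L n)+q) % 2^(L n) = q := by
    rw [Nat.add_comm, Nat.add_mul_mod_self_right]; exact Nat.mod_eq_of_lt hq
  have hd2 : (v*(L n + 1)+ℓ) / (L n + 1) = v := by
    rw [Nat.add_comm, Nat.add_mul_div_right _ _ (Nat.succ_pos _), Nat.div_eq_of_lt (by omega)]; omega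
  have hm2 : (v*(L n + 1)+ℓ) % (L n + 1) = ℓ := by
    rw [Nat.add_comm, Nat.add_mul_mod_self_right]; exact Nat.mod_eq_of_lt (by omega)
  simp only [dec3, e3, h3, hd, hm, hd2, hm2]

section PB

variable {n : ℕ} {M : ℕ → ℕ → ℤ}

lemma P_self {v : ℕ} (ℓ : ℕ) (hv : 1 ≤ v) : P M v ℓ (qIdx v ℓ) := ⟨hv, Or.inl rfl⟩

lemma P_up {v ℓ q : ℕ} (h : P M v ℓ q) : P M v (ℓ+1) (q/2) := by
  obtain ⟨hv, h⟩ := h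
  refine ⟨hv, ?_⟩
  rcases h with h | ⟨h2, x, hx, h3, h4, h5⟩
  · exact Or.inl (by rw [qIdx_succ, h])
  · exact Or.inr ⟨h2, x, hx, by rw [qIdx_succ, h3], by rw [qIdx_succ, h4], h5⟩

lemma P_zero_iff {v q : ℕ} : P M v 0 q ↔ 1 ≤ v ∧ q = v - 1 := by
  constructor
  · rintro ⟨hv, h | ⟨h2, x, hx, h3, h4, h5⟩⟩
    · rw [qIdx_zero] at h; exact ⟨hv, h.symm⟩
    · rw [qIdx_zero] at h3 h4; omega
  · rintro ⟨hv, h⟩; exact ⟨hv, Or.inl (by rw [qIdx_zero, h])⟩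

lemma cs_le (i ℓ q : ℕ) : cs M i ℓ q ≤ i := by
  letI : DecidablePred (fun v => P M v ℓ q) := Classical.decPred _
  exact Nat.findGreatest_le i

lemma le_cs {v i : ℕ} (ℓ q : ℕ) (hvi : v ≤ i) (h : P M v ℓ q) : v ≤ cs M i ℓ q := by
  letI : DecidablePred (fun v => P M v ℓ q) := Classical.decPred _
  exact Nat.le_findGreatest hvi h

lemma cs_spec {i ℓ q : ℕ} (h : 0 < cs M i ℓ q) : P M (cs M i ℓ q) ℓ q := by
  letI : DecidablePred (fun v => P M v ℓ q) := Classical.decPred _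
  by_cases hex : ∃ m, 0 < m ∧ m ≤ i ∧ P M m ℓ q
  · obtain ⟨m, _, hmi, hPm⟩ := hex
    exact Nat.findGreatest_spec (P := fun v => P M v ℓ q) hmi hPm
  · push_neg at hex
    have h0 : cs M i ℓ q = 0 :=
      Nat.findGreatest_eq_zero_iff.mpr (fun {m} hm hmi => hex m hm hmi)
    omega

lemma cs_not_after {i ℓ q w : ℕ} (h1 : cs M i ℓ q < w) (h2 : w ≤ i) : ¬ P M w ℓ q := by
  letI : DecidablePred (fun v => P M v ℓ q) := Classical.decPred _
  exact Nat.findGreatest_is_greatest (P := fun v => P M v ℓ q) h1 h2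

lemma cs_pos {v i ℓ q : ℕ} (hv : 1 ≤ v) (hvi : v ≤ i) (h : P M v ℓ q) : 0 < cs M i ℓ q :=
  lt_of_lt_of_le hv (le_cs ℓ q hvi h)

/-- Monge facts -/
lemma dhat_mono (hM : IsLowerTriUnitMonge n M) {k x : ℕ} (hk1 : 1 ≤ k) (hk2 : k + 1 ≤ n)
    (hx : 1 ≤ x) : dhat M k x ≤ dhat M k (x+1) := by
  rcases le_or_gt (x+1) k with h | h
  · have h1 : min x k = x := min_eq_left (by omega)
    have h2 : min (x+1) k = x+1 := min_eq_left h
    rw [dhat, dhat, h1, h2]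
    exact hM.2 k x hx (by omega) hk2
  · have h1 : min x k = k := min_eq_right (by omega)
    have h2 : min (x+1) k = k := min_eq_right (by omega)
    rw [dhat, dhat, h1, h2]

lemma dhat_bd (hM : IsLowerTriUnitMonge n M) {k x : ℕ} (hk1 : 1 ≤ k) (hk2 : k + 1 ≤ n)
    (hx : 1 ≤ x) : -1 ≤ dhat M k x ∧ dhat M k x ≤ 1 := by
  have hj1 : 1 ≤ min x k := le_min hx hk1
  have hj2 : min x k ≤ k := min_le_right x k
  have := hM.1 k (min x k) hj1 hj2 hk2
  rw [dhat]; omega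

/-- breakpoint set of δ̂ₖ -/
def Bfin (M : ℕ → ℕ → ℤ) (n k : ℕ) : Finset ℕ :=
  (Icc 1 n).filter (fun x => dhat M k x ≠ dhat M k (x+1))

lemma bp_mem {k x : ℕ} (hk2 : k + 1 ≤ n) (hx : 1 ≤ x)
    (hne : dhat M k x ≠ dhat M k (x+1)) : x ∈ Bfin M n k := by
  refine Finset.mem_filter.mpr ⟨Finset.mem_Icc.mpr ⟨hx, ?_⟩, hne⟩
  by_contra hxn
  push_neg at hxn
  have h1 : min x k = k := min_eq_right (by omega)
  have h2 : min (x+1) k = k := min_eq_right (by omega)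
  exact hne (by rw [dhat, dhat, h1, h2])

lemma Bfin_card (hM : IsLowerTriUnitMonge n M) {k : ℕ} (hk1 : 1 ≤ k) (hk2 : k + 1 ≤ n) :
    (Bfin M n k).card ≤ 2 := by
  have hmono : ∀ x ∈ Icc 1 n, (0:ℤ) ≤ dhat M k (x+1) - dhat M k x := by
    intro x hx
    have := dhat_mono hM hk1 hk2 (Finset.mem_Icc.mp hx).1
    omega
  have h1 : ((Bfin M n k).card : ℤ) ≤ ∑ x ∈ Bfin M n k, (dhat M k (x+1) - dhat M k x) := by
    rw [Finset.card_eq_sum_ones, Nat.cast_sum]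
    refine Finset.sum_le_sum (fun x hx => ?_)
    obtain ⟨hxi, hne⟩ := Finset.mem_filter.mp hx
    have := dhat_mono hM hk1 hk2 (Finset.mem_Icc.mp hxi).1
    push_cast; omega
  have h2 : ∑ x ∈ Bfin M n k, (dhat M k (x+1) - dhat M k x)
      ≤ ∑ x ∈ Icc 1 n, (dhat M k (x+1) - dhat M k x) :=
    Finset.sum_le_sum_of_subset_of_nonneg (Finset.filter_subset _ _)
      (fun x hx _ => hmono x hx)
  have h3 : ∑ x ∈ Icc 1 n, (dhat M k (x+1) - dhat M k x) = dhat M k (n+1) - dhat M k 1 := by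
    have : Icc 1 n = Ico 1 (n+1) := by rw [Finset.Ico_add_one_right_eq_Icc]
    rw [this]
    exact telescope (dhat M k) (by omega)
  have b1 := dhat_bd hM hk1 hk2 (x := n+1) (by omega)
  have b2 := dhat_bd hM hk1 hk2 (x := 1) (by omega)
  have : ((Bfin M n k).card : ℤ) ≤ 2 := by omega
  exact_mod_cast this

lemma M_tel (hM : IsLowerTriUnitMonge n M) {i j : ℕ} (hj : 1 ≤ j) (hji : j ≤ i) (hin : i ≤ n) :
    M i j = M j j + ∑ k ∈ Ico j i, dhat M k j := by
  induction i, hji using Nat.le_induction with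
  | base => simp
  | succ i hji ih =>
      rw [Finset.sum_Ico_succ_top hji, ← add_assoc, ← ih (by omega)]
      have hmin : min j i = j := min_eq_left hji
      rw [dhat, hmin]; ring

/-- if node (ℓ,q) is not touched at step w then δ̂_{w-1} is constant on its interval -/
lemma dhat_const_of_notP {w ℓ q : ℕ} (h2 : 2 ≤ w) (hnp : ¬ P M w ℓ q)
    {a b : ℕ} (h1 : 1 ≤ a) (ha : qIdx a ℓ = q) (hb : qIdx b ℓ = q) (hab : a ≤ b) :
    dhat M (w-1) a = dhat M (w-1) b := by
  refine constOn (fun x hx hq1 hq2 => ?_) h1 ha hb hab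
  by_contra hne
  exact hnp ⟨by omega, Or.inr ⟨h2, x, hx, hq1, hq2, hne⟩⟩

end PB

section PC

variable (n : ℕ) (M : ℕ → ℕ → ℤ)

open Classical in
/-- raw internal vertices: (version, level, index) -/
def IVraw : Finset (ℕ × ℕ × ℕ) :=
  ((Icc 1 n) ×ˢ (range (L n + 1)) ×ˢ (range (2^(L n)))).filter
    (fun p => P M p.1 p.2.1 p.2.2 ∧ p.2.2 < 2^(L n - p.2.1))

def Vv : Finset ℕ :=
  ((Icc 1 n).image rE) ∪ ((Icc 1 n).image cE) ∪
    (IVraw n M).image (fun p => e3 n p.1 p.2.1 p.2.2)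

def Een : Finset (ℕ × ℕ) := (Icc 1 n).image (fun i => (rE i, e3 n i (L n) 0))

open Classical in
def Eex : Finset (ℕ × ℕ) :=
  ((IVraw n M).filter (fun p => p.2.1 = 0)).image
    (fun p => (e3 n p.1 p.2.1 p.2.2, cE (p.2.2 + 1)))

open Classical in
def Ech : Finset (ℕ × ℕ) :=
  (((IVraw n M) ×ˢ ({0,1} : Finset ℕ)).filter
    (fun ps => 1 ≤ ps.1.2.1 ∧ 0 < cs M ps.1.1 (ps.1.2.1 - 1) (2*ps.1.2.2 + ps.2))).image
    (fun ps => (e3 n ps.1.1 ps.1.2.1 ps.1.2.2,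
       e3 n (cs M ps.1.1 (ps.1.2.1 - 1) (2*ps.1.2.2 + ps.2)) (ps.1.2.1 - 1)
         (2*ps.1.2.2 + ps.2)))

def Ee : Finset (ℕ × ℕ) := Een n ∪ Eex n M ∪ Ech n M

def wf : ℕ × ℕ → ℤ := fun xy =>
  if xy.1 % 3 = 2 ∧ xy.2 % 3 = 2 then
    ∑ k ∈ Ico (dec3 n xy.2).1 (dec3 n xy.1).1,
      dhat M k ((dec3 n xy.2).2.2 * 2^((dec3 n xy.2).2.1) + 1)
  else if xy.1 % 3 = 2 ∧ xy.2 % 3 = 1 then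
    M (xy.2/3) (xy.2/3) + ∑ k ∈ Ico (xy.2/3) (dec3 n xy.1).1, dhat M k (xy.2/3)
  else 0

variable {n M}

lemma n_lt_pow : n < 2^(L n) := Nat.lt_pow_succ_log_self (by norm_num) n

lemma qIdx_lt_pow {t ℓ : ℕ} (ht : t ≤ n) (hℓ : ℓ ≤ L n) : qIdx t ℓ < 2^(L n - ℓ) := by
  have h2 : (0:ℕ) < 2^ℓ := Nat.pow_pos (by norm_num)
  rw [qIdx, Nat.div_lt_iff_lt_mul h2]
  calc t - 1 < 2^(L n) := lt_of_le_of_lt (by omega) n_lt_pow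
  _ = 2^(L n - ℓ) * 2^ℓ := by rw [← pow_add]; congr 1; omega

lemma P_x_le {v ℓ q : ℕ} (h : P M v ℓ q) (hv : v ≤ n) :
    ∃ t, 1 ≤ t ∧ t ≤ n ∧ qIdx t ℓ = q := by
  obtain ⟨h1, h | ⟨h2, x, hx, h3, h4, h5⟩⟩ := h
  · exact ⟨v, h1, hv, h⟩
  · refine ⟨x, hx, ?_, h3⟩
    by_contra hxn
    push_neg at hxn
    have hxv : v - 1 ≤ x := by omega
    have e1 : min x (v-1) = v-1 := min_eq_right hxv
    have e2 : min (x+1) (v-1) = v-1 := min_eq_right (by omega)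
    exact h5 (by rw [dhat, dhat, e1, e2])

lemma P_q_lt {v ℓ q : ℕ} (h : P M v ℓ q) (hv : v ≤ n) (hℓ : ℓ ≤ L n) :
    q < 2^(L n - ℓ) := by
  obtain ⟨t, ht1, ht2, ht3⟩ := P_x_le h hv
  exact ht3 ▸ qIdx_lt_pow ht2 hℓ

lemma mem_IVraw {v ℓ q : ℕ} :
    (v, ℓ, q) ∈ IVraw n M ↔ 1 ≤ v ∧ v ≤ n ∧ ℓ ≤ L n ∧ P M v ℓ q := by
  classical
  constructor
  · intro h
    simp only [IVraw, Finset.mem_filter, Finset.mem_product, Finset.mem_Icc,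
      Finset.mem_range] at h
    exact ⟨h.1.1.1, h.1.1.2, by omega, h.2.1⟩
  · rintro ⟨h1, h2, h3, h4⟩
    have hq : q < 2^(L n - ℓ) := P_q_lt h4 h2 h3
    have hq2 : q < 2^(L n) :=
      lt_of_lt_of_le hq (Nat.pow_le_pow_right (by norm_num) (by omega))
    simp only [IVraw, Finset.mem_filter, Finset.mem_product, Finset.mem_Icc,
      Finset.mem_range]
    exact ⟨⟨⟨h1, h2⟩, by omega, hq2⟩, h4, hq⟩

lemma P_top {i : ℕ} (h1 : 1 ≤ i) (h2 : i ≤ n) : P M i (L n) 0 := by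
  have : qIdx i (L n) = 0 := by
    rw [qIdx]
    exact Nat.div_eq_of_lt (lt_of_le_of_lt (by omega) n_lt_pow)
  exact this ▸ P_self (L n) h1

lemma e3_mem_Vv {v ℓ q : ℕ} (h : (v, ℓ, q) ∈ IVraw n M) :
    e3 n v ℓ q ∈ Vv n M := by
  refine Finset.mem_union_right _ (Finset.mem_image.mpr ⟨(v, ℓ, q), h, rfl⟩)

lemma rE_mem_Vv {i : ℕ} (h1 : 1 ≤ i) (h2 : i ≤ n) : rE i ∈ Vv n M :=
  Finset.mem_union_left _ (Finset.mem_union_left _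
    (Finset.mem_image.mpr ⟨i, Finset.mem_Icc.mpr ⟨h1, h2⟩, rfl⟩))

lemma cE_mem_Vv {j : ℕ} (h1 : 1 ≤ j) (h2 : j ≤ n) : cE j ∈ Vv n M :=
  Finset.mem_union_left _ (Finset.mem_union_right _
    (Finset.mem_image.mpr ⟨j, Finset.mem_Icc.mpr ⟨h1, h2⟩, rfl⟩))

lemma edge_fst_Vv : ∀ e ∈ Ee n M, e.1 ∈ Vv n M := by
  classical
  intro e he
  rcases Finset.mem_union.mp he with he | he
  · rcases Finset.mem_union.mp he with he | he
    · obtain ⟨i, hi, rfl⟩ := Finset.mem_image.mp he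
      obtain ⟨h1, h2⟩ := Finset.mem_Icc.mp hi
      exact rE_mem_Vv h1 h2
    · obtain ⟨p, hp, rfl⟩ := Finset.mem_image.mp he
      have hp' : p ∈ IVraw n M := Finset.mem_filter.mp hp |>.1
      exact e3_mem_Vv (by rwa [show (p.1, p.2.1, p.2.2) = p from rfl])
  · obtain ⟨ps, hps, rfl⟩ := Finset.mem_image.mp he
    have hp' : ps.1 ∈ IVraw n M := (Finset.mem_product.mp (Finset.mem_filter.mp hps).1).1
    exact e3_mem_Vv (by rwa [show (ps.1.1, ps.1.2.1, ps.1.2.2) = ps.1 from rfl])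

lemma edge_snd_Vv : ∀ e ∈ Ee n M, e.2 ∈ Vv n M := by
  classical
  intro e he
  rcases Finset.mem_union.mp he with he | he
  · rcases Finset.mem_union.mp he with he | he
    · obtain ⟨i, hi, rfl⟩ := Finset.mem_image.mp he
      obtain ⟨h1, h2⟩ := Finset.mem_Icc.mp hi
      exact e3_mem_Vv (mem_IVraw.mpr ⟨h1, h2, le_refl _, P_top h1 h2⟩)
    · obtain ⟨p, hp, rfl⟩ := Finset.mem_image.mp he
      obtain ⟨hp', hp0⟩ := Finset.mem_filter.mp hp
      have hm : (p.1, p.2.1, p.2.2) ∈ IVraw n M := by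
        rwa [show (p.1, p.2.1, p.2.2) = p from rfl]
      obtain ⟨h1, h2, h3, h4⟩ := mem_IVraw.mp hm
      rw [hp0] at h4
      obtain ⟨hv, hq⟩ := P_zero_iff.mp h4
      have : p.2.2 + 1 = p.1 := by omega
      rw [this]
      exact cE_mem_Vv h1 h2
  · obtain ⟨ps, hps, rfl⟩ := Finset.mem_image.mp he
    obtain ⟨hmem, hl1, hcs⟩ := Finset.mem_filter.mp hps
    obtain ⟨hIV, hs⟩ := Finset.mem_product.mp hmem
    have hm : (ps.1.1, ps.1.2.1, ps.1.2.2) ∈ IVraw n M := by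
      rwa [show (ps.1.1, ps.1.2.1, ps.1.2.2) = ps.1 from rfl]
    obtain ⟨h1, h2, h3, h4⟩ := mem_IVraw.mp hm
    have hs01 : ps.2 ≤ 1 := by
      rcases Finset.mem_insert.mp hs with h | h
      · omega
      · simp only [Finset.mem_singleton] at h; omega
    set c := 2*ps.1.2.2 + ps.2 with hc
    set u := cs M ps.1.1 (ps.1.2.1 - 1) c with hu
    refine e3_mem_Vv (mem_IVraw.mpr ⟨hcs, le_trans (cs_le _ _ _) h2, by omega, cs_spec hcs⟩)

open Classical in
def Hgr (n : ℕ) (M : ℕ → ℕ → ℤ) : WDigraph :=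
  ⟨Vv n M, Ee n M, wf n M, edge_fst_Vv, edge_snd_Vv⟩

end PC

section PD

variable {n : ℕ} {M : ℕ → ℕ → ℤ}

lemma e3_ne_rE (v ℓ q i : ℕ) : e3 n v ℓ q ≠ rE i := by
  intro h
  have := congrArg (· % 3) h
  simp only [e3_mod, rE_mod] at this
  omega

lemma e3_ne_cE (v ℓ q j : ℕ) : e3 n v ℓ q ≠ cE j := by
  intro h
  have := congrArg (· % 3) h
  simp only [e3_mod, cE_mod] at this
  omega

lemma rE_ne_cE (i j : ℕ) : rE i ≠ cE j := by
  intro h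
  have := congrArg (· % 3) h
  simp only [rE_mod, cE_mod] at this
  omega

lemma e3_inj {v ℓ q v' ℓ' q' : ℕ} (hℓ : ℓ ≤ L n) (hq : q < 2^(L n))
    (hℓ' : ℓ' ≤ L n) (hq' : q' < 2^(L n))
    (h : e3 n v ℓ q = e3 n v' ℓ' q') : v = v' ∧ ℓ = ℓ' ∧ q = q' := by
  have := (dec3_e3 (n := n) v hℓ hq).symm.trans ((congrArg (dec3 n) h).trans (dec3_e3 (n := n) v' hℓ' hq'))
  simp only [Prod.mk.injEq] at this
  exact ⟨this.1, this.2.1, this.2.2⟩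

lemma IVraw_bounds {v ℓ q : ℕ} (h : (v, ℓ, q) ∈ IVraw n M) :
    ℓ ≤ L n ∧ q < 2^(L n) := by
  obtain ⟨h1, h2, h3, h4⟩ := mem_IVraw.mp h
  exact ⟨h3, lt_of_lt_of_le (P_q_lt h4 h2 h3)
    (Nat.pow_le_pow_right (by norm_num) (by omega))⟩

lemma mem_Een_intro {i : ℕ} (h1 : 1 ≤ i) (h2 : i ≤ n) :
    (rE i, e3 n i (L n) 0) ∈ Ee n M :=
  Finset.mem_union_left _ (Finset.mem_union_left _
    (Finset.mem_image.mpr ⟨i, Finset.mem_Icc.mpr ⟨h1, h2⟩, rfl⟩))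

lemma mem_Eex_intro {v q : ℕ} (h : (v, 0, q) ∈ IVraw n M) :
    (e3 n v 0 q, cE (q+1)) ∈ Ee n M := by
  classical
  refine Finset.mem_union_left _ (Finset.mem_union_right _ (Finset.mem_image.mpr
    ⟨(v, 0, q), Finset.mem_filter.mpr ⟨h, rfl⟩, rfl⟩))

lemma mem_Ech_intro {v ℓ q s : ℕ} (h : (v, ℓ+1, q) ∈ IVraw n M) (hs : s ≤ 1)
    (hcs : 0 < cs M v ℓ (2*q+s)) :
    (e3 n v (ℓ+1) q, e3 n (cs M v ℓ (2*q+s)) ℓ (2*q+s)) ∈ Ee n M := by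
  classical
  refine Finset.mem_union_right _ (Finset.mem_image.mpr
    ⟨((v, ℓ+1, q), s), Finset.mem_filter.mpr ⟨Finset.mem_product.mpr ⟨h, ?_⟩, ?_, ?_⟩, rfl⟩)
  · simp only [Finset.mem_insert, Finset.mem_singleton]; omega
  · exact Nat.le_add_left 1 ℓ
  · simpa using hcs

lemma mem_Ee_elim {x y : ℕ} (h : (x, y) ∈ Ee n M) :
    (∃ i, 1 ≤ i ∧ i ≤ n ∧ x = rE i ∧ y = e3 n i (L n) 0) ∨
    (∃ v q, (v, 0, q) ∈ IVraw n M ∧ x = e3 n v 0 q ∧ y = cE (q+1)) ∨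
    (∃ v ℓ q s, (v, ℓ+1, q) ∈ IVraw n M ∧ s ≤ 1 ∧ 0 < cs M v ℓ (2*q+s) ∧
      x = e3 n v (ℓ+1) q ∧ y = e3 n (cs M v ℓ (2*q+s)) ℓ (2*q+s)) := by
  classical
  rcases Finset.mem_union.mp h with h | h
  · rcases Finset.mem_union.mp h with h | h
    · obtain ⟨i, hi, heq⟩ := Finset.mem_image.mp h
      obtain ⟨h1, h2⟩ := Finset.mem_Icc.mp hi
      have hx : x = rE i := (congrArg Prod.fst heq).symm
      have hy : y = e3 n i (L n) 0 := (congrArg Prod.snd heq).symm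
      exact Or.inl ⟨i, h1, h2, hx, hy⟩
    · obtain ⟨p, hp, heq⟩ := Finset.mem_image.mp h
      obtain ⟨hIV, h0⟩ := Finset.mem_filter.mp hp
      have hx : x = e3 n p.1 p.2.1 p.2.2 := (congrArg Prod.fst heq).symm
      have hy : y = cE (p.2.2 + 1) := (congrArg Prod.snd heq).symm
      refine Or.inr (Or.inl ⟨p.1, p.2.2, ?_, by rw [hx, h0], hy⟩)
      have : (p.1, p.2.1, p.2.2) = p := rfl
      rw [← h0]; rwa [this]
  · obtain ⟨ps, hps, heq⟩ := Finset.mem_image.mp h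
    obtain ⟨hmem, hl1, hcs⟩ := Finset.mem_filter.mp hps
    obtain ⟨hIV, hs⟩ := Finset.mem_product.mp hmem
    have hx : x = e3 n ps.1.1 ps.1.2.1 ps.1.2.2 := (congrArg Prod.fst heq).symm
    have hy : y = e3 n (cs M ps.1.1 (ps.1.2.1 - 1) (2*ps.1.2.2 + ps.2)) (ps.1.2.1 - 1)
        (2*ps.1.2.2 + ps.2) := (congrArg Prod.snd heq).symm
    have hs01 : ps.2 ≤ 1 := by
      rcases Finset.mem_insert.mp hs with hh | hh
      · omega
      · simp only [Finset.mem_singleton] at hh; omega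
    refine Or.inr (Or.inr ⟨ps.1.1, ps.1.2.1 - 1, ps.1.2.2, ps.2, ?_, hs01, ?_, ?_, ?_⟩)
    · have he : ps.1.2.1 - 1 + 1 = ps.1.2.1 := by omega
      rw [he]
      have : (ps.1.1, ps.1.2.1, ps.1.2.2) = ps.1 := rfl
      rwa [this]
    · exact hcs
    · rw [hx]; congr 1; omega
    · exact hy
end PD

section PE

variable {n : ℕ} {M : ℕ → ℕ → ℤ}

lemma wf_r (i y : ℕ) : wf n M (rE i, y) = 0 := by
  have h := rE_mod i
  simp only [wf, h]
  norm_num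

lemma wf_ch {v ℓ q v' ℓ' q' : ℕ} (hℓ : ℓ ≤ L n) (hq : q < 2^(L n))
    (hℓ' : ℓ' ≤ L n) (hq' : q' < 2^(L n)) :
    wf n M (e3 n v ℓ q, e3 n v' ℓ' q') = ∑ k ∈ Ico v' v, dhat M k (q'*2^ℓ' + 1) := by
  simp only [wf, e3_mod, dec3_e3 (n := n) v hℓ hq, dec3_e3 (n := n) v' hℓ' hq']
  norm_num

lemma wf_ex {v ℓ q j : ℕ} (hℓ : ℓ ≤ L n) (hq : q < 2^(L n)) :
    wf n M (e3 n v ℓ q, cE j) = M j j + ∑ k ∈ Ico j v, dhat M k j := by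
  simp only [wf, e3_mod, cE_mod, cE_div, dec3_e3 (n := n) v hℓ hq]
  norm_num

lemma walkWeight_cons_cons (w : ℕ × ℕ → ℤ) (a b : ℕ) (l : List ℕ) :
    walkWeight w (a :: b :: l) = w (a, b) + walkWeight w (b :: l) := by
  simp [walkWeight]

lemma walkWeight_single (w : ℕ × ℕ → ℤ) (a : ℕ) : walkWeight w [a] = 0 := by
  simp [walkWeight]

end PE

section PF

variable (n : ℕ) (M : ℕ → ℕ → ℤ) (j : ℕ)

/-- canonical descent: list of internal vertices from level ℓ (version v) down to the leaf -/
noncomputable def FD : ℕ → ℕ → List ℕ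
  | 0, v => [e3 n v 0 (qIdx j 0)]
  | (ℓ+1), v => e3 n v (ℓ+1) (qIdx j (ℓ+1)) :: FD ℓ (cs M v ℓ (qIdx j ℓ))

variable {n M j}

lemma FD_head (ℓ v : ℕ) : (FD n M j ℓ v).head? = some (e3 n v ℓ (qIdx j ℓ)) := by
  cases ℓ <;> rfl

lemma FD_ne_nil (ℓ v : ℕ) : FD n M j ℓ v ≠ [] := by
  cases ℓ <;> simp [FD]

lemma qIdx_split (j ℓ : ℕ) :
    qIdx j ℓ = 2 * qIdx j (ℓ+1) + (qIdx j ℓ % 2) := by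
  rw [qIdx_succ]
  omega

lemma FD_good (hj1 : 1 ≤ j) (hjn : j ≤ n) :
    ∀ ℓ v, ℓ ≤ L n → P M v ℓ (qIdx j ℓ) → j ≤ v → v ≤ n →
    (∀ x ∈ FD n M j ℓ v, ∃ v' ℓ' q', ℓ' ≤ ℓ ∧ q' < 2^(L n) ∧
        (v', ℓ', q') ∈ IVraw n M ∧ x = e3 n v' ℓ' q') ∧
    List.Chain' (fun u v => (u, v) ∈ Ee n M) (FD n M j ℓ v ++ [cE j]) := by
  intro ℓ
  induction ℓ with
  | zero =>
      intro v hℓ hP hjv hvn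
      have hIV : (v, 0, qIdx j 0) ∈ IVraw n M := mem_IVraw.mpr ⟨by omega, hvn, by omega, hP⟩
      constructor
      · intro x hx
        simp only [FD, List.mem_singleton] at hx
        exact ⟨v, 0, qIdx j 0, le_refl 0, (IVraw_bounds hIV).2, hIV, hx⟩
      · simp only [FD, List.cons_append, List.nil_append]
        refine List.isChain_cons_cons.mpr ⟨?_, List.isChain_singleton _⟩
        have := mem_Eex_intro (M := M) hIV
        have hq0 : qIdx j 0 + 1 = j := by rw [qIdx_zero]; omega
        rwa [hq0] at this
  | succ ℓ ih =>
      intro v hℓ hP hjv hvn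
      have hIV : (v, ℓ+1, qIdx j (ℓ+1)) ∈ IVraw n M :=
        mem_IVraw.mpr ⟨by omega, hvn, hℓ, hP⟩
      have hPj : P M j ℓ (qIdx j ℓ) := P_self ℓ hj1
      have hcs : 0 < cs M v ℓ (qIdx j ℓ) := cs_pos hj1 hjv hPj
      set u := cs M v ℓ (qIdx j ℓ) with hu
      have hju : j ≤ u := le_cs ℓ _ hjv hPj
      have hun : u ≤ n := le_trans (cs_le _ _ _) hvn
      have hPu : P M u ℓ (qIdx j ℓ) := cs_spec hcs
      obtain ⟨ihm, ihc⟩ := ih u (by omega) hPu hju hun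
      constructor
      · intro x hx
        simp only [FD] at hx
        rcases List.mem_cons.mp hx with h | h
        · exact ⟨v, ℓ+1, qIdx j (ℓ+1), le_refl _, (IVraw_bounds hIV).2, hIV, h⟩
        · obtain ⟨v', ℓ', q', h1, h2, h3, h4⟩ := ihm x h
          exact ⟨v', ℓ', q', by omega, h2, h3, h4⟩
      · simp only [FD, List.cons_append]
        refine List.isChain_cons.mpr ⟨?_, ihc⟩
        intro z hz
        have hhead : (FD n M j ℓ u ++ [cE j]).head? = some (e3 n u ℓ (qIdx j ℓ)) := by
          rw [List.head?_append_of_ne_nil _ (FD_ne_nil ℓ u)]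
          · exact FD_head ℓ u
        rw [hhead] at hz
        injection hz with hz
        subst hz
        have := mem_Ech_intro (M := M) (s := qIdx j ℓ % 2) hIV (by omega)
          (by rw [← qIdx_split]; exact hcs)
        rwa [← qIdx_split] at this

end PF

section PG

variable {n : ℕ} {M : ℕ → ℕ → ℤ}

lemma rE_inj {i i' : ℕ} (h : rE i = rE i') : i = i' := by
  simp only [rE] at h; omega

lemma cE_inj {j j' : ℕ} (h : cE j = cE j') : j = j' := by
  simp only [cE] at h; omega

lemma no_edge_from_cE {j z : ℕ} (h : (cE j, z) ∈ Ee n M) : False := by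
  rcases mem_Ee_elim h with ⟨i, _, _, hx, _⟩ | ⟨v, q, _, hx, _⟩ | ⟨v, ℓ, q, s, _, _, _, hx, _⟩
  · exact rE_ne_cE i j hx.symm
  · exact e3_ne_cE _ _ _ _ hx.symm
  · exact e3_ne_cE _ _ _ _ hx.symm

lemma R_reach :
    ∀ l : List ℕ, List.Chain' (fun u v => (u, v) ∈ Ee n M) l →
    ∀ {v ℓ q j : ℕ}, l.head? = some (e3 n v ℓ q) → l.getLast? = some (cE j) →
      (v, ℓ, q) ∈ IVraw n M → qIdx j ℓ = q ∧ j ≤ v ∧ 1 ≤ j := by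
  intro l
  induction l with
  | nil => intro _ v ℓ q j hh; simp at hh
  | cons x t ih =>
      intro hc v ℓ q j hh hl hIV
      have hx : x = e3 n v ℓ q := by
        simp only [List.head?_cons, Option.some_inj] at hh; exact hh
      cases t with
      | nil =>
          simp only [List.getLast?_singleton, Option.some_inj] at hl
          exact absurd (hx ▸ hl) (e3_ne_cE _ _ _ _)
      | cons y t' =>
          obtain ⟨hxy, hct⟩ := List.isChain_cons_cons.mp hc
          have hlast : (y :: t').getLast? = some (cE j) := by
            rwa [List.getLast?_cons_cons] at hl
          subst hx
          rcases mem_Ee_elim hxy with ⟨i, _, _, hx', _⟩ |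
            ⟨v₀, q₀, hIV₀, hx', hy⟩ | ⟨v₁, ℓ₁, q₁, s, hIV₁, hs, hcs, hx', hy⟩
          · exact absurd hx' (e3_ne_rE _ _ _ _)
          · obtain ⟨hb1, hb2⟩ := IVraw_bounds hIV
            obtain ⟨hb1', hb2'⟩ := IVraw_bounds hIV₀
            obtain ⟨hv, hℓ, hq⟩ := e3_inj hb1 hb2 hb1' hb2' hx'
            subst hv; subst hℓ; subst hq
            cases t' with
            | nil =>
                simp only [List.getLast?_singleton, Option.some_inj] at hlast
                have hj : j = q + 1 := (cE_inj (hy ▸ hlast).symm)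
                obtain ⟨h1, h2, h3, h4⟩ := mem_IVraw.mp hIV
                obtain ⟨hv1, hq1⟩ := P_zero_iff.mp h4
                refine ⟨by rw [qIdx_zero]; omega, by omega, by omega⟩
            | cons z t'' =>
                obtain ⟨hyz, _⟩ := List.isChain_cons_cons.mp hct
                rw [hy] at hyz
                exact absurd hyz no_edge_from_cE
          · obtain ⟨hb1, hb2⟩ := IVraw_bounds hIV
            obtain ⟨hb1', hb2'⟩ := IVraw_bounds hIV₁
            obtain ⟨hv, hℓ, hq⟩ := e3_inj hb1 hb2 hb1' hb2' hx'
            subst hv; subst hq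
            set c := 2*q + s with hcdef
            set u := cs M v ℓ₁ c with hudef
            have hun : u ≤ n := le_trans (cs_le _ _ _) (mem_IVraw.mp hIV₁).2.1
            have hIVy : (u, ℓ₁, c) ∈ IVraw n M :=
              mem_IVraw.mpr ⟨hcs, hun, by omega, cs_spec hcs⟩
            have hyh : (y :: t').head? = some (e3 n u ℓ₁ c) := by
              simp only [List.head?_cons, Option.some_inj]; exact hy
            obtain ⟨r1, r2, r3⟩ := ih hct hyh hlast hIVy
            refine ⟨?_, le_trans r2 (cs_le _ _ _), r3⟩
            rw [hℓ, qIdx_succ, r1]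
            omega

lemma U_weight :
    ∀ l : List ℕ, List.Chain' (fun u v => (u, v) ∈ Ee n M) l →
    ∀ {v ℓ q j : ℕ}, l.head? = some (e3 n v ℓ q) → l.getLast? = some (cE j) →
      (v, ℓ, q) ∈ IVraw n M →
      walkWeight (wf n M) l = M j j + ∑ k ∈ Ico j v, dhat M k j := by
  intro l
  induction l with
  | nil => intro _ v ℓ q j hh; simp at hh
  | cons x t ih =>
      intro hc v ℓ q j hh hl hIV
      have hx : x = e3 n v ℓ q := by
        simp only [List.head?_cons, Option.some_inj] at hh; exact hh
      cases t with
      | nil =>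
          simp only [List.getLast?_singleton, Option.some_inj] at hl
          exact absurd (hx ▸ hl) (e3_ne_cE _ _ _ _)
      | cons y t' =>
          obtain ⟨hxy, hct⟩ := List.isChain_cons_cons.mp hc
          have hlast : (y :: t').getLast? = some (cE j) := by
            rwa [List.getLast?_cons_cons] at hl
          subst hx
          rcases mem_Ee_elim hxy with ⟨i, _, _, hx', _⟩ |
            ⟨v₀, q₀, hIV₀, hx', hy⟩ | ⟨v₁, ℓ₁, q₁, s, hIV₁, hs, hcs, hx', hy⟩
          · exact absurd hx' (e3_ne_rE _ _ _ _)
          · obtain ⟨hb1, hb2⟩ := IVraw_bounds hIV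
            obtain ⟨hb1', hb2'⟩ := IVraw_bounds hIV₀
            obtain ⟨hv, hℓ, hq⟩ := e3_inj hb1 hb2 hb1' hb2' hx'
            subst hv; subst hℓ; subst hq
            cases t' with
            | nil =>
                simp only [List.getLast?_singleton, Option.some_inj] at hlast
                have hj : j = q + 1 := (cE_inj (hy ▸ hlast).symm)
                subst hj
                rw [walkWeight_cons_cons, walkWeight_single, hy, wf_ex hb1 hb2]
                ring
            | cons z t'' =>
                obtain ⟨hyz, _⟩ := List.isChain_cons_cons.mp hct
                rw [hy] at hyz
                exact absurd hyz no_edge_from_cE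
          · obtain ⟨hb1, hb2⟩ := IVraw_bounds hIV
            obtain ⟨hb1', hb2'⟩ := IVraw_bounds hIV₁
            obtain ⟨hv, hℓ, hq⟩ := e3_inj hb1 hb2 hb1' hb2' hx'
            subst hv; subst hq
            set c := 2*q + s with hcdef
            set u := cs M v ℓ₁ c with hudef
            have hun : u ≤ n := le_trans (cs_le _ _ _) (mem_IVraw.mp hIV₁).2.1
            have hIVy : (u, ℓ₁, c) ∈ IVraw n M :=
              mem_IVraw.mpr ⟨hcs, hun, by omega, cs_spec hcs⟩
            have hyh : (y :: t').head? = some (e3 n u ℓ₁ c) := by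
              simp only [List.head?_cons, Option.some_inj]; exact hy
            obtain ⟨r1, r2, r3⟩ := R_reach (y :: t') hct hyh hlast hIVy
            have ihw := ih hct hyh hlast hIVy
            rw [walkWeight_cons_cons, ihw, hy]
            obtain ⟨hbu1, hbu2⟩ := IVraw_bounds hIVy
            rw [wf_ch hb1 hb2 hbu1 hbu2]
            have hsum : ∑ k ∈ Ico u v, dhat M k (c*2^ℓ₁ + 1)
                = ∑ k ∈ Ico u v, dhat M k j := by
              refine Finset.sum_congr rfl (fun k hk => ?_)
              obtain ⟨hk1, hk2⟩ := Finset.mem_Ico.mp hk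
              have hnp : ¬ P M (k+1) ℓ₁ c := cs_not_after (i := v) (by omega) (by omega)
              have hle : c * 2^ℓ₁ + 1 ≤ j := by
                have h1 : c * 2 ^ ℓ₁ ≤ j - 1 := qIdx_ge r1
                generalize hA : c * 2 ^ ℓ₁ = A at h1 ⊢
                omega
              have := dhat_const_of_notP (M := M) (w := k+1) (by omega) hnp
                (a := c*2^ℓ₁ + 1) (b := j) (by omega) (qIdx_left c ℓ₁) r1 hle
              simpa using this
            rw [hsum]
            have hs2 := Finset.sum_Ico_consecutive (fun k => dhat M k j) r2
              (cs_le (M := M) v ℓ₁ c)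
            linear_combination hs2

end PG

section PH

variable {n : ℕ} {M : ℕ → ℕ → ℤ}

lemma Hgr_E : (Hgr n M).E = Ee n M := rfl
lemma Hgr_V : (Hgr n M).V = Vv n M := rfl
lemma Hgr_w : (Hgr n M).w = wf n M := rfl

lemma qIdx_top {j : ℕ} (hj : j ≤ n) : qIdx j (L n) = 0 :=
  Nat.div_eq_of_lt (lt_of_le_of_lt (by omega) n_lt_pow)

lemma walk_weight_full {i j : ℕ} (hi1 : 1 ≤ i) (hin : i ≤ n) :
    ∀ l, IsWalkFromTo (Hgr n M) l (rE i) (cE j) →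
      j ≤ i ∧ 1 ≤ j ∧
      walkWeight (wf n M) l = M j j + ∑ k ∈ Ico j i, dhat M k j := by
  intro l hw
  obtain ⟨⟨hne, hmem, hchain⟩, hh, hl⟩ := hw
  rw [Hgr_E] at hchain
  cases l with
  | nil => exact absurd rfl hne
  | cons x t =>
      have hx : x = rE i := by
        simp only [List.head?_cons, Option.some_inj] at hh; exact hh
      subst hx
      cases t with
      | nil =>
          simp only [List.getLast?_singleton, Option.some_inj] at hl
          exact absurd hl (rE_ne_cE i j)
      | cons y t' =>
          obtain ⟨hxy, hct⟩ := List.isChain_cons_cons.mp hchain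
          have hlast : (y :: t').getLast? = some (cE j) := by
            rwa [List.getLast?_cons_cons] at hl
          rcases mem_Ee_elim hxy with ⟨i₀, hi₀1, hi₀n, hx', hy⟩ |
            ⟨v₀, q₀, hIV₀, hx', hy⟩ | ⟨v₁, ℓ₁, q₁, s, hIV₁, hs, hcs, hx', hy⟩
          · have hi : i₀ = i := rE_inj hx'.symm
            subst hi
            have hIV : (i₀, L n, 0) ∈ IVraw n M :=
              mem_IVraw.mpr ⟨hi₀1, hi₀n, le_refl _, P_top hi₀1 hi₀n⟩
            have hyh : (y :: t').head? = some (e3 n i₀ (L n) 0) := by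
              simp only [List.head?_cons, Option.some_inj]; exact hy
            obtain ⟨r1, r2, r3⟩ := R_reach (y :: t') hct hyh hlast hIV
            have hU := U_weight (y :: t') hct hyh hlast hIV
            refine ⟨r2, r3, ?_⟩
            rw [walkWeight_cons_cons, hU, wf_r]
            ring
          · exact absurd hx'.symm (e3_ne_rE _ _ _ _)
          · exact absurd hx'.symm (e3_ne_rE _ _ _ _)

/-- canonical path -/
noncomputable def cpath (n : ℕ) (M : ℕ → ℕ → ℤ) (i j : ℕ) : List ℕ :=
  rE i :: (FD n M j (L n) i ++ [cE j])

lemma FD_nodup (hj1 : 1 ≤ j) (hjn : j ≤ n) :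
    ∀ ℓ v, ℓ ≤ L n → P M v ℓ (qIdx j ℓ) → j ≤ v → v ≤ n → (FD n M j ℓ v).Nodup := by
  intro ℓ
  induction ℓ with
  | zero => intro v _ _ _ _; simp [FD]
  | succ ℓ ih =>
      intro v hℓ hP hjv hvn
      have hPj : P M j ℓ (qIdx j ℓ) := P_self ℓ hj1
      have hcs : 0 < cs M v ℓ (qIdx j ℓ) := cs_pos hj1 hjv hPj
      set u := cs M v ℓ (qIdx j ℓ) with hu
      have hju : j ≤ u := le_cs ℓ _ hjv hPj
      have hun : u ≤ n := le_trans (cs_le _ _ _) hvn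
      have hPu : P M u ℓ (qIdx j ℓ) := cs_spec hcs
      have hmem := (FD_good hj1 hjn ℓ u (by omega) hPu hju hun).1
      simp only [FD, List.nodup_cons]
      refine ⟨?_, ih u (by omega) hPu hju hun⟩
      intro hmem'
      obtain ⟨v', ℓ', q', hℓ', hq', hIV', heq⟩ := hmem _ hmem'
      have hb : qIdx j (ℓ+1) < 2^(L n) :=
        lt_of_lt_of_le (qIdx_lt_pow hjn hℓ) (Nat.pow_le_pow_right (by norm_num) (by omega))
      obtain ⟨_, hℓeq, _⟩ := e3_inj hℓ hb (le_trans hℓ' (by omega)) hq' heq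
      omega

lemma cpath_is_path {i j : ℕ} (hi1 : 1 ≤ i) (hin : i ≤ n) (hj1 : 1 ≤ j) (hji : j ≤ i) :
    IsPathFromTo (Hgr n M) (cpath n M i j) (rE i) (cE j) := by
  have hjn : j ≤ n := le_trans hji hin
  have hq0 : qIdx j (L n) = 0 := qIdx_top hjn
  have hP : P M i (L n) (qIdx j (L n)) := by rw [hq0]; exact P_top hi1 hin
  obtain ⟨hmem, hchain⟩ := FD_good hj1 hjn (L n) i (le_refl _) hP hji hin
  have hFDnd := FD_nodup hj1 hjn (L n) i (le_refl _) hP hji hin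
  refine ⟨⟨⟨by simp [cpath], ?_, ?_⟩, by simp [cpath], ?_⟩, ?_⟩
  · -- membership
    intro x hx
    rw [Hgr_V]
    simp only [cpath, List.mem_cons, List.mem_append, List.mem_singleton] at hx
    rcases hx with rfl | hx | rfl | hfalse
    · exact rE_mem_Vv hi1 hin
    · obtain ⟨v', ℓ', q', _, _, hIV', rfl⟩ := hmem _ hx
      exact e3_mem_Vv hIV'
    · exact cE_mem_Vv hj1 hjn
    · simp at hfalse
  · -- chain
    show List.Chain' (fun u v => (u, v) ∈ (Hgr n M).E) (cpath n M i j)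
    rw [Hgr_E]
    simp only [cpath]
    refine List.isChain_cons.mpr ⟨?_, hchain⟩
    intro z hz
    rw [List.head?_append_of_ne_nil _ (FD_ne_nil (L n) i), FD_head] at hz
    injection hz with hz
    subst hz
    rw [hq0]
    exact mem_Een_intro hi1 hin
  · -- last
    show (rE i :: (FD n M j (L n) i ++ [cE j])).getLast? = some (cE j)
    rw [show rE i :: (FD n M j (L n) i ++ [cE j]) = (rE i :: FD n M j (L n) i) ++ [cE j] by simp]
    exact List.getLast?_concat
  · -- nodup
    simp only [cpath, List.nodup_cons]
    constructor
    · intro hx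
      rcases List.mem_append.mp hx with hx | hx
      · obtain ⟨v', ℓ', q', _, _, _, heq⟩ := hmem _ hx
        exact e3_ne_rE _ _ _ _ heq.symm
      · simp only [List.mem_singleton] at hx
        exact rE_ne_cE i j hx
    · rw [List.nodup_append]
      refine ⟨hFDnd, List.nodup_singleton _, ?_⟩
      intro x hx y hx' hxy
      simp only [List.mem_singleton] at hx'
      subst hx'
      subst hxy
      obtain ⟨v', ℓ', q', _, _, _, heq⟩ := hmem _ hx
      exact e3_ne_cE _ _ _ _ heq.symm

lemma no_path {i j : ℕ} (hi1 : 1 ≤ i) (hij : i < j) (hjn : j ≤ n) :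
    ¬ ∃ l, IsPathFromTo (Hgr n M) l (rE i) (cE j) := by
  rintro ⟨l, hl, _⟩
  obtain ⟨r2, _, _⟩ := walk_weight_full hi1 (by omega) l hl
  omega

/-- rank function for DAG-ness -/
def rankv (n : ℕ) (x : ℕ) : ℕ :=
  if x % 3 = 0 then L n + 3 else if x % 3 = 1 then 0 else (dec3 n x).2.1 + 1

lemma rankv_rE (i : ℕ) : rankv n (rE i) = L n + 3 := by simp [rankv, rE_mod]
lemma rankv_cE (j : ℕ) : rankv n (cE j) = 0 := by simp [rankv, cE_mod]
lemma rankv_e3 {ℓ q : ℕ} (v : ℕ) (hℓ : ℓ ≤ L n) (hq : q < 2^(L n)) :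
    rankv n (e3 n v ℓ q) = ℓ + 1 := by
  simp [rankv, e3_mod, dec3_e3 (n := n) v hℓ hq]

lemma rank_lt {x y : ℕ} (h : (x, y) ∈ Ee n M) : rankv n y < rankv n x := by
  rcases mem_Ee_elim h with ⟨i, hi1, hin, rfl, rfl⟩ |
    ⟨v, q, hIV, rfl, rfl⟩ | ⟨v, ℓ, q, s, hIV, hs, hcs, rfl, rfl⟩
  · rw [rankv_rE, rankv_e3 i (le_refl _) (Nat.pow_pos (by norm_num))]
    omega
  · obtain ⟨hb1, hb2⟩ := IVraw_bounds hIV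
    rw [rankv_e3 v hb1 hb2, rankv_cE]
    omega
  · obtain ⟨hb1, hb2⟩ := IVraw_bounds hIV
    have hun : cs M v ℓ (2*q+s) ≤ n := le_trans (cs_le _ _ _) (mem_IVraw.mp hIV).2.1
    have hIVy : (cs M v ℓ (2*q+s), ℓ, 2*q+s) ∈ IVraw n M :=
      mem_IVraw.mpr ⟨hcs, hun, by omega, cs_spec hcs⟩
    obtain ⟨hb1', hb2'⟩ := IVraw_bounds hIVy
    rw [rankv_e3 v hb1 hb2, rankv_e3 _ hb1' hb2']
    omega

lemma chain_rank :
    ∀ l : List ℕ, List.Chain' (fun u v => (u, v) ∈ Ee n M) l →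
      ∀ {a b : ℕ}, l.head? = some a → l.getLast? = some b → 2 ≤ l.length →
      rankv n b < rankv n a := by
  intro l
  induction l with
  | nil => intro _ a b hh; simp at hh
  | cons x t ih =>
      intro hc a b hh hl hlen
      have hx : x = a := by
        simp only [List.head?_cons, Option.some_inj] at hh; exact hh
      subst hx
      cases t with
      | nil => simp at hlen
      | cons y t' =>
          obtain ⟨hxy, hct⟩ := List.isChain_cons_cons.mp hc
          have h1 : rankv n y < rankv n x := rank_lt hxy
          have hlast : (y :: t').getLast? = some b := by
            rwa [List.getLast?_cons_cons] at hl
          cases t' with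
          | nil =>
              simp only [List.getLast?_singleton, Option.some_inj] at hlast
              subst hlast; exact h1
          | cons z t'' =>
              have h2 := ih hct rfl hlast (by simp only [List.length_cons]; omega)
              omega

lemma Hgr_isDAG : IsDAG (Hgr n M) := by
  rintro ⟨v, l, hlen, ⟨⟨hne, hmem, hchain⟩, hh, hl⟩⟩
  rw [Hgr_E] at hchain
  exact lt_irrefl _ (chain_rank l hchain hh hl hlen)

end PH

section PI

variable {n : ℕ} {M : ℕ → ℕ → ℤ}

lemma Bfin_card' (hM : IsLowerTriUnitMonge n M) :
    ∀ v, 1 ≤ v → v ≤ n → (Bfin M n (v-1)).card ≤ 2 := by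
  intro v hv1 hvn
  rcases Nat.lt_or_ge v 2 with h | h
  · have hv : v = 1 := by omega
    subst hv
    have : Bfin M n 0 = ∅ := by
      refine Finset.filter_false_of_mem (fun x _ => ?_)
      simp [dhat]
    simp [this]
  · have h1 : 1 ≤ v - 1 := by omega
    have h2 : (v - 1) + 1 ≤ n := by omega
    exact Bfin_card hM h1 h2

open Classical in
lemma IVraw_card (hM : IsLowerTriUnitMonge n M) :
    (IVraw n M).card ≤ 3 * (n * (L n + 1)) := by
  have hsub : IVraw n M ⊆ (Icc 1 n ×ˢ range (L n + 1)).biUnion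
      (fun t => (insert (qIdx t.1 t.2)
        ((Bfin M n (t.1 - 1)).image (fun x => qIdx x t.2))).image
        (fun q => (t.1, t.2, q))) := by
    intro p hp
    obtain ⟨v, ℓ, q⟩ := p
    obtain ⟨h1, h2, h3, h4⟩ := mem_IVraw.mp hp
    refine Finset.mem_biUnion.mpr ⟨(v, ℓ), ?_, ?_⟩
    · simp only [Finset.mem_product, Finset.mem_Icc, Finset.mem_range]
      exact ⟨⟨h1, h2⟩, by omega⟩
    · refine Finset.mem_image.mpr ⟨q, ?_, rfl⟩
      obtain ⟨_, hq | ⟨hv2, x, hx1, hx2, hx3, hx4⟩⟩ := h4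
      · exact Finset.mem_insert.mpr (Or.inl hq.symm)
      · refine Finset.mem_insert.mpr (Or.inr (Finset.mem_image.mpr ⟨x, ?_, hx2⟩))
        exact bp_mem (by omega) hx1 hx4
  calc (IVraw n M).card ≤ _ := Finset.card_le_card hsub
  _ ≤ ∑ t ∈ Icc 1 n ×ˢ range (L n + 1), ((insert (qIdx t.1 t.2)
        ((Bfin M n (t.1 - 1)).image (fun x => qIdx x t.2))).image
        (fun q => (t.1, t.2, q))).card := Finset.card_biUnion_le
  _ ≤ ∑ t ∈ Icc 1 n ×ˢ range (L n + 1), 3 := by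
      refine Finset.sum_le_sum (fun t ht => ?_)
      obtain ⟨ht1, _⟩ := Finset.mem_product.mp ht
      obtain ⟨htl, htr⟩ := Finset.mem_Icc.mp ht1
      calc ((insert (qIdx t.1 t.2)
          ((Bfin M n (t.1 - 1)).image (fun x => qIdx x t.2))).image
          (fun q => (t.1, t.2, q))).card
          ≤ (insert (qIdx t.1 t.2)
            ((Bfin M n (t.1 - 1)).image (fun x => qIdx x t.2))).card :=
            Finset.card_image_le
        _ ≤ ((Bfin M n (t.1 - 1)).image (fun x => qIdx x t.2)).card + 1 :=
            Finset.card_insert_le _ _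
        _ ≤ (Bfin M n (t.1 - 1)).card + 1 := by
            have := Finset.card_image_le (s := Bfin M n (t.1 - 1))
              (f := fun x => qIdx x t.2)
            omega
        _ ≤ 3 := by have := Bfin_card' hM t.1 htl htr; omega
  _ = 3 * (n * (L n + 1)) := by
      rw [Finset.sum_const, smul_eq_mul, Finset.card_product, Nat.card_Icc,
        Finset.card_range]
      have h : n + 1 - 1 = n := by omega
      rw [h]
      ring

lemma size_bound (hM : IsLowerTriUnitMonge n M) :
    (Hgr n M).size ≤ 3*n + 12*(n*(L n + 1)) := by
  classical
  have hIV := IVraw_card hM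
  have hVv : (Vv n M).card ≤ n + n + (IVraw n M).card := by
    calc (Vv n M).card ≤ ((Icc 1 n).image rE ∪ (Icc 1 n).image cE).card
        + ((IVraw n M).image (fun p => e3 n p.1 p.2.1 p.2.2)).card :=
          Finset.card_union_le _ _
    _ ≤ ((Icc 1 n).image rE).card + ((Icc 1 n).image cE).card
        + ((IVraw n M).image (fun p => e3 n p.1 p.2.1 p.2.2)).card := by
          have := Finset.card_union_le ((Icc 1 n).image rE) ((Icc 1 n).image cE)
          omega
    _ ≤ n + n + (IVraw n M).card := by
          have h1 := Finset.card_image_le (s := Icc 1 n) (f := rE)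
          have h2 := Finset.card_image_le (s := Icc 1 n) (f := cE)
          have h3 := Finset.card_image_le (s := IVraw n M)
            (f := fun p => e3 n p.1 p.2.1 p.2.2)
          have h4 : (Icc 1 n).card = n := by rw [Nat.card_Icc]; omega
          omega
  have hEe : (Ee n M).card ≤ n + (IVraw n M).card + 2 * (IVraw n M).card := by
    calc (Ee n M).card ≤ (Een n ∪ Eex n M).card + (Ech n M).card :=
          Finset.card_union_le _ _
    _ ≤ (Een n).card + (Eex n M).card + (Ech n M).card := by
          have := Finset.card_union_le (Een n) (Eex n M)
          omega
    _ ≤ n + (IVraw n M).card + 2 * (IVraw n M).card := by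
          have h1 : (Een n).card ≤ n := by
            calc (Een n).card ≤ (Icc 1 n).card := Finset.card_image_le
            _ = n := by rw [Nat.card_Icc]; omega
          have h2 : (Eex n M).card ≤ (IVraw n M).card := by
            calc (Eex n M).card ≤ ((IVraw n M).filter (fun p => p.2.1 = 0)).card :=
                  Finset.card_image_le
            _ ≤ (IVraw n M).card := Finset.card_filter_le _ _
          have h3 : (Ech n M).card ≤ 2 * (IVraw n M).card := by
            calc (Ech n M).card
                ≤ ((((IVraw n M) ×ˢ ({0,1} : Finset ℕ))).filter
                  (fun ps => 1 ≤ ps.1.2.1 ∧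
                    0 < cs M ps.1.1 (ps.1.2.1 - 1) (2*ps.1.2.2 + ps.2))).card :=
                  Finset.card_image_le
            _ ≤ ((IVraw n M) ×ˢ ({0,1} : Finset ℕ)).card := Finset.card_filter_le _ _
            _ = 2 * (IVraw n M).card := by
                  rw [Finset.card_product, show ({0,1} : Finset ℕ).card = 2 from rfl]
                  ring
          omega
  have : (Hgr n M).size = (Vv n M).card + (Ee n M).card := rfl
  omega

end PI

end

end Emu

theorem lowerTri_unitMonge_emulator :
    ∃ C : ℝ, 0 < C ∧
      ∀ (n : ℕ) (M : ℕ → ℕ → ℤ), 2 ≤ n → IsLowerTriUnitMonge n M →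
        ∃ (H : WDigraph) (r c : ℕ → ℕ),
          IsDAG H ∧
          ((H.size : ℝ) ≤ C * (n : ℝ) * (Real.logb 2 (n : ℝ) + 1)) ∧
          (∀ x, 1 ≤ x → x ≤ n → r x ∈ H.V) ∧
          (∀ y, 1 ≤ y → y ≤ n → c y ∈ H.V) ∧
          (∀ x x', 1 ≤ x → x ≤ n → 1 ≤ x' → x' ≤ n → r x = r x' → x = x') ∧
          (∀ y y', 1 ≤ y → y ≤ n → 1 ≤ y' → y' ≤ n → c y = c y' → y = y') ∧
          (∀ x y, 1 ≤ x → x ≤ n → 1 ≤ y → y ≤ n → r x ≠ c y) ∧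
          (∀ i j, 1 ≤ j → j ≤ i → i ≤ n →
            HasDistW H H.w (r i) (c j) (M i j)) ∧
          (∀ i j, 1 ≤ i → i < j → j ≤ n →
            ¬ ∃ l, IsPathFromTo H l (r i) (c j)) := by
  refine ⟨100, by norm_num, ?_⟩
  intro n M hn hM
  refine ⟨Emu.Hgr n M, Emu.rE, Emu.cE, Emu.Hgr_isDAG, ?_, ?_, ?_, ?_, ?_, ?_, ?_, ?_⟩
  · -- size bound
    have hs := Emu.size_bound hM
    have hlog : ((Nat.log 2 n : ℕ) : ℝ) ≤ Real.logb 2 n := Real.natLog_le_logb n 2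
    have hlb0 : (0:ℝ) ≤ Real.logb 2 n :=
      Real.logb_nonneg (by norm_num) (by exact_mod_cast (by omega : (1:ℕ) ≤ n))
    have hn0 : (0:ℝ) ≤ (n:ℝ) := by positivity
    have hsr : ((Emu.Hgr n M).size : ℝ) ≤ 3*n + 12*(n*((Nat.log 2 n : ℝ) + 1 + 1)) := by
      have : ((Emu.Hgr n M).size : ℝ) ≤ ((3*n + 12*(n*(Emu.L n + 1)) : ℕ) : ℝ) := by
        exact_mod_cast hs
      refine le_trans this ?_
      rw [Emu.L]
      push_cast
      ring_nf
      exact le_rfl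
    nlinarith [hsr, hlog, hlb0, hn0]
  · intro x h1 h2; exact Emu.rE_mem_Vv h1 h2
  · intro y h1 h2; exact Emu.cE_mem_Vv h1 h2
  · intro x x' _ _ _ _ h; exact Emu.rE_inj h
  · intro y y' _ _ _ _ h; exact Emu.cE_inj h
  · intro x y _ _ _ _; exact Emu.rE_ne_cE x y
  · intro i j hj1 hji hin
    have hi1 : 1 ≤ i := le_trans hj1 hji
    constructor
    · refine ⟨Emu.cpath n M i j, Emu.cpath_is_path (M := M) hi1 hin hj1 hji, ?_⟩
      have hw := (Emu.walk_weight_full (M := M) hi1 hin _ (Emu.cpath_is_path (M := M) hi1 hin hj1 hji).1).2.2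
      show walkWeight (Emu.wf n M) _ = M i j
      rw [hw]
      exact (Emu.M_tel hM hj1 hji hin).symm
    · intro l hl
      have hw := (Emu.walk_weight_full (M := M) hi1 hin l hl.1).2.2
      show M i j ≤ walkWeight (Emu.wf n M) l
      rw [hw]
      exact le_of_eq (Emu.M_tel hM hj1 hji hin)
  · intro i j hi1 hij hjn
    exact Emu.no_path hi1 hij hjn
end

section
/- Let n, m ≥ 2, let N = 2(n−1), let P be an N×(m−1) matrix of nonnegative integers, let U be an integer vector of length n and V an integer vector of length m, and define M[x,y] = U[x] + V[y] + Σ_{i=2x−1}^{N} Σ_{j=y}^{m−1} P[i,j] for 1 ≤ x ≤ n, 1 ≤ y ≤ m. Let H be a weighted digraph that is a DAG with integer weights containing distinct vertices r[1],…,r[N] and c[1],…,c[m−1] such that for all 1 ≤ x ≤ N and 1 ≤ y ≤ m−1 a directed path from r[x] to c[y] exists and d_H(r[x], c[y]) = Σ_{i=x}^{N} Σ_{j=y}^{m−1} P[i,j], and in which each r[x] has no incoming edges and each c[y] has no outgoing edges. Form H′ from H by adding fresh vertices r₀[1],…,r₀[n] and c₀[1],…,c₀[m] and the following edges: r₀[x]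 → r[2x−1] with weight U[x] for each 1 ≤ x ≤ n−1; c[y] → c₀[y] with weight V[y] for each 1 ≤ y ≤ m−1; r₀[x] → c₀[m] with weight U[x] + V[m] for each 1 ≤ x ≤ n−1; and r₀[n] → c₀[y] with weight U[n] + V[y] for each 1 ≤ y ≤ m. Then for all 1 ≤ x ≤ n and 1 ≤ y ≤ m, a directed path from r₀[x] to c₀[y] exists in H′ and d_{H′}(r₀[x], c₀[y]) = M[x,y]. -/
lemma walkWeight_pair (w : ℕ × ℕ → ℤ) (a b : ℕ) : walkWeight w [a, b] = w (a, b) := by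
  simp [walkWeight]

lemma walkWeight_cons (w : ℕ × ℕ → ℤ) (a b : ℕ) (l : List ℕ) :
    walkWeight w (a :: b :: l) = w (a, b) + walkWeight w (b :: l) := by
  simp [walkWeight]

lemma walkWeight_concat (w : ℕ × ℕ → ℤ) :
    ∀ (l : List ℕ) (h : l ≠ []) (b : ℕ),
      walkWeight w (l ++ [b]) = walkWeight w l + w (l.getLast h, b)
  | [], h, b => absurd rfl h
  | [a], _, b => by simp [walkWeight]
  | a :: c :: t, _, b => by
      rw [show (a :: c :: t) ++ [b] = a :: c :: (t ++ [b]) by simp, walkWeight_cons,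
        show c :: (t ++ [b]) = (c :: t) ++ [b] from rfl,
        walkWeight_concat w (c :: t) (by simp) b,
        walkWeight_cons, List.getLast_cons (l := c :: t) (by simp)]
      ring

lemma walkWeight_cons_ne (w : ℕ × ℕ → ℤ) (a : ℕ) (l : List ℕ) (h : l ≠ []) :
    walkWeight w (a :: l) = w (a, l.head h) + walkWeight w l := by
  cases l with
  | nil => exact absurd rfl h
  | cons b t => simp [walkWeight_cons]

lemma walkWeight_cons_concat (w : ℕ × ℕ → ℤ) (a b : ℕ) (l : List ℕ) (h : l ≠ []) :
    walkWeight w (a :: l ++ [b]) =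
      w (a, l.head h) + walkWeight w l + w (l.getLast h, b) := by
  rw [show a :: l ++ [b] = (a :: l) ++ [b] from rfl,
    walkWeight_concat w (a :: l) (by simp) b, walkWeight_cons_ne w a l h,
    List.getLast_cons h]

lemma walkWeight_congr (w w' : ℕ × ℕ → ℤ) :
    ∀ (l : List ℕ), List.Chain' (fun u v => w (u, v) = w' (u, v)) l →
      walkWeight w l = walkWeight w' l
  | [], _ => rfl
  | [a], _ => rfl
  | a :: b :: t, h => by
      rw [walkWeight_cons, walkWeight_cons, (List.isChain_cons_cons.mp h).1,
        walkWeight_congr w w' (b :: t) (List.isChain_cons_cons.mp h).2]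

lemma chain'_tail_mem {R : ℕ → ℕ → Prop} :
    ∀ {l : List ℕ}, List.Chain' R l → ∀ a ∈ l.tail, ∃ b, R b a
  | [], _, a, ha => by simp at ha
  | [x], _, a, ha => by simp at ha
  | x :: y :: t, h, a, ha => by
      rcases List.mem_cons.mp ha with rfl | ha'
      · exact ⟨x, (List.isChain_cons_cons.mp h).1⟩
      · exact chain'_tail_mem (List.isChain_cons_cons.mp h).2 a ha'

lemma chain'_dropLast_mem {R : ℕ → ℕ → Prop} :
    ∀ {l : List ℕ}, List.Chain' R l → ∀ a ∈ l.dropLast, ∃ b, R a b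
  | [], _, a, ha => by simp at ha
  | [x], _, a, ha => by simp at ha
  | x :: y :: t, h, a, ha => by
      rw [List.dropLast_cons₂, List.mem_cons] at ha
      rcases ha with rfl | ha'
      · exact ⟨y, (List.isChain_cons_cons.mp h).1⟩
      · exact chain'_dropLast_mem (List.isChain_cons_cons.mp h).2 a ha'

lemma chain'_restrict {R S : ℕ → ℕ → Prop} {p : ℕ → Prop}
    (hRS : ∀ u v, p u → p v → R u v → S u v) :
    ∀ {l : List ℕ}, (∀ v ∈ l, p v) → List.Chain' R l → List.Chain' S l
  | [], _, _ => List.isChain_nil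
  | [a], _, _ => List.isChain_singleton a
  | a :: b :: t, hp, h => by
      simp only [List.Chain'] at h ⊢
      rw [List.isChain_cons_cons] at h ⊢
      exact ⟨hRS a b (hp a (by simp)) (hp b (by simp)) h.1,
        chain'_restrict hRS (fun v hv => hp v (List.mem_cons_of_mem a hv)) h.2⟩

lemma path_decomp {l : List ℕ} {u v : ℕ} (huv : u ≠ v)
    (h1 : l.head? = some u) (h2 : l.getLast? = some v) :
    ∃ mid, l = u :: mid ++ [v] := by
  cases l with
  | nil => simp at h1
  | cons a t =>
    simp at h1
    subst h1
    cases ht : t.eq_nil_or_concat with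
    | inl h => subst h; simp at h2; exact absurd h2 huv
    | inr h =>
      obtain ⟨mid, b, rfl⟩ := h
      refine ⟨mid, ?_⟩
      simp only [List.concat_eq_append] at h2 ⊢
      have : (a :: (mid ++ [b])).getLast? = some b := by
        rw [List.getLast?_eq_getLast (by simp), List.getLast_cons (by simp)]
        simp
      rw [this] at h2
      simp at h2
      subst h2
      rfl

lemma chain'_cons_concat {R : ℕ → ℕ → Prop} {u v : ℕ} {mid : List ℕ} (hm : mid ≠ []) :
    List.Chain' R (u :: mid ++ [v]) ↔
      R u (mid.head hm) ∧ List.Chain' R mid ∧ R (mid.getLast hm) v := by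
  simp only [List.Chain']
  rw [show u :: mid ++ [v] = (u :: mid) ++ [v] from rfl, List.isChain_append,
    List.isChain_cons]
  constructor
  · rintro ⟨⟨h1, h2⟩, -, h3⟩
    refine ⟨h1 _ (List.head?_eq_head hm), h2, h3 _ ?_ v (by simp)⟩
    rw [List.getLast?_eq_getLast (by simp), List.getLast_cons hm]
    rfl
  · rintro ⟨h1, h2, h3⟩
    refine ⟨⟨?_, h2⟩, List.isChain_singleton v, ?_⟩
    · intro h hh; rw [List.head?_eq_head hm] at hh; simpa [← Option.some_inj.mp hh] using h1
    · intro x hx y hy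
      rw [List.getLast?_eq_getLast (by simp), List.getLast_cons hm] at hx
      simp at hy
      obtain rfl : y = v := hy.symm
      rw [← Option.some_inj.mp hx]
      exact h3

theorem emulator_extension (n m : ℕ) (hn : 2 ≤ n) (hm : 2 ≤ m)
    (P : ℕ → ℕ → ℤ) (U V : ℕ → ℤ) (M : ℕ → ℕ → ℤ)
    (hPnonneg : ∀ i j, 1 ≤ i → i ≤ 2 * (n - 1) → 1 ≤ j → j ≤ m - 1 → 0 ≤ P i j)
    (hMdef : ∀ x y, 1 ≤ x → x ≤ n → 1 ≤ y → y ≤ m →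
      M x y = U x + V y +
        ∑ i ∈ Finset.Icc (2 * x - 1) (2 * (n - 1)),
          ∑ j ∈ Finset.Icc y (m - 1), P i j)
    (H : WDigraph) (r c : ℕ → ℕ)
    (hDAG : IsDAG H)
    (hrV : ∀ x, 1 ≤ x → x ≤ 2 * (n - 1) → r x ∈ H.V)
    (hcV : ∀ y, 1 ≤ y → y ≤ m - 1 → c y ∈ H.V)
    (hrInj : ∀ x x', 1 ≤ x → x ≤ 2 * (n - 1) → 1 ≤ x' → x' ≤ 2 * (n - 1) →
      r x = r x' → x = x')
    (hcInj : ∀ y y', 1 ≤ y → y ≤ m - 1 → 1 ≤ y' → y' ≤ m - 1 → c y = c y' → y = y')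
    (hrc : ∀ x y, 1 ≤ x → x ≤ 2 * (n - 1) → 1 ≤ y → y ≤ m - 1 → r x ≠ c y)
    (hHdist : ∀ x y, 1 ≤ x → x ≤ 2 * (n - 1) → 1 ≤ y → y ≤ m - 1 →
      HasDistW H H.w (r x) (c y)
        (∑ i ∈ Finset.Icc x (2 * (n - 1)), ∑ j ∈ Finset.Icc y (m - 1), P i j))
    (hrNoIn : ∀ x, 1 ≤ x → x ≤ 2 * (n - 1) → ∀ e ∈ H.E, e.2 ≠ r x)
    (hcNoOut : ∀ y, 1 ≤ y → y ≤ m - 1 → ∀ e ∈ H.E, e.1 ≠ c y)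
    (r₀ c₀ : ℕ → ℕ)
    (hr₀fresh : ∀ x, 1 ≤ x → x ≤ n → r₀ x ∉ H.V)
    (hc₀fresh : ∀ y, 1 ≤ y → y ≤ m → c₀ y ∉ H.V)
    (hr₀Inj : ∀ x x', 1 ≤ x → x ≤ n → 1 ≤ x' → x' ≤ n → r₀ x = r₀ x' → x = x')
    (hc₀Inj : ∀ y y', 1 ≤ y → y ≤ m → 1 ≤ y' → y' ≤ m → c₀ y = c₀ y' → y = y')
    (hr₀c₀ : ∀ x y, 1 ≤ x → x ≤ n → 1 ≤ y → y ≤ m → r₀ x ≠ c₀ y)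
    (H' : WDigraph)
    (hV' : H'.V = H.V ∪ (Finset.Icc 1 n).image r₀ ∪ (Finset.Icc 1 m).image c₀)
    (hE' : H'.E = H.E
      ∪ (Finset.Icc 1 (n - 1)).image (fun x => (r₀ x, r (2 * x - 1)))
      ∪ (Finset.Icc 1 (m - 1)).image (fun y => (c y, c₀ y))
      ∪ (Finset.Icc 1 (n - 1)).image (fun x => (r₀ x, c₀ m))
      ∪ (Finset.Icc 1 m).image (fun y => (r₀ n, c₀ y)))
    (hwOld : ∀ e ∈ H.E, H'.w e = H.w e)
    (hw₁ : ∀ x, 1 ≤ x → x ≤ n - 1 → H'.w (r₀ x, r (2 * x - 1)) = U x)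
    (hw₂ : ∀ y, 1 ≤ y → y ≤ m - 1 → H'.w (c y, c₀ y) = V y)
    (hw₃ : ∀ x, 1 ≤ x → x ≤ n - 1 → H'.w (r₀ x, c₀ m) = U x + V m)
    (hw₄ : ∀ y, 1 ≤ y → y ≤ m → H'.w (r₀ n, c₀ y) = U n + V y) :
    ∀ x y, 1 ≤ x → x ≤ n → 1 ≤ y → y ≤ m →
      HasDistW H' H'.w (r₀ x) (c₀ y) (M x y) := by
  -- subset and membership facts
  have hsubE : ∀ e ∈ H.E, e ∈ H'.E := by
    intro e he; rw [hE']; simp only [Finset.mem_union]; tauto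
  have hsubV : ∀ v ∈ H.V, v ∈ H'.V := by
    intro v hv; rw [hV']; simp only [Finset.mem_union]; tauto
  have hr₀V : ∀ z, 1 ≤ z → z ≤ n → r₀ z ∈ H'.V := by
    intro z h1 h2; rw [hV']
    simp only [Finset.mem_union, Finset.mem_image, Finset.mem_Icc]
    exact Or.inl (Or.inr ⟨z, ⟨h1, h2⟩, rfl⟩)
  have hc₀V : ∀ z, 1 ≤ z → z ≤ m → c₀ z ∈ H'.V := by
    intro z h1 h2; rw [hV']
    simp only [Finset.mem_union, Finset.mem_image, Finset.mem_Icc]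
    exact Or.inr ⟨z, ⟨h1, h2⟩, rfl⟩
  have hEr : ∀ z, 1 ≤ z → z ≤ n - 1 → (r₀ z, r (2 * z - 1)) ∈ H'.E := by
    intro z h1 h2; rw [hE']
    simp only [Finset.mem_union, Finset.mem_image, Finset.mem_Icc]
    exact Or.inl (Or.inl (Or.inl (Or.inr ⟨z, ⟨h1, h2⟩, rfl⟩)))
  have hEc : ∀ z, 1 ≤ z → z ≤ m - 1 → (c z, c₀ z) ∈ H'.E := by
    intro z h1 h2; rw [hE']
    simp only [Finset.mem_union, Finset.mem_image, Finset.mem_Icc]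
    exact Or.inl (Or.inl (Or.inr ⟨z, ⟨h1, h2⟩, rfl⟩))
  have hEd1 : ∀ z, 1 ≤ z → z ≤ n - 1 → (r₀ z, c₀ m) ∈ H'.E := by
    intro z h1 h2; rw [hE']
    simp only [Finset.mem_union, Finset.mem_image, Finset.mem_Icc]
    exact Or.inl (Or.inr ⟨z, ⟨h1, h2⟩, rfl⟩)
  have hEd2 : ∀ z, 1 ≤ z → z ≤ m → (r₀ n, c₀ z) ∈ H'.E := by
    intro z h1 h2; rw [hE']
    simp only [Finset.mem_union, Finset.mem_image, Finset.mem_Icc]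
    exact Or.inr ⟨z, ⟨h1, h2⟩, rfl⟩
  -- case analysis on edges of H'
  have hcases : ∀ e ∈ H'.E, e ∈ H.E ∨
      (∃ a, 1 ≤ a ∧ a ≤ n - 1 ∧ e = (r₀ a, r (2 * a - 1))) ∨
      (∃ b, 1 ≤ b ∧ b ≤ m - 1 ∧ e = (c b, c₀ b)) ∨
      (∃ a, 1 ≤ a ∧ a ≤ n - 1 ∧ e = (r₀ a, c₀ m)) ∨
      (∃ b, 1 ≤ b ∧ b ≤ m ∧ e = (r₀ n, c₀ b)) := by
    intro e he
    rw [hE'] at he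
    simp only [Finset.mem_union, Finset.mem_image, Finset.mem_Icc] at he
    rcases he with ((((he | ⟨a, ⟨h1, h2⟩, he⟩) | ⟨b, ⟨h1, h2⟩, he⟩) | ⟨a, ⟨h1, h2⟩, he⟩)
      | ⟨b, ⟨h1, h2⟩, he⟩)
    · exact Or.inl he
    · exact Or.inr (Or.inl ⟨a, h1, h2, he.symm⟩)
    · exact Or.inr (Or.inr (Or.inl ⟨b, h1, h2, he.symm⟩))
    · exact Or.inr (Or.inr (Or.inr (Or.inl ⟨a, h1, h2, he.symm⟩)))
    · exact Or.inr (Or.inr (Or.inr (Or.inr ⟨b, h1, h2, he.symm⟩)))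
  -- A: no edge of H' enters any r₀ z
  have hA : ∀ e ∈ H'.E, ∀ z, 1 ≤ z → z ≤ n → e.2 ≠ r₀ z := by
    intro e he z h1 h2 hEq
    rcases hcases e he with he' | ⟨a, ha1, ha2, rfl⟩ | ⟨b, hb1, hb2, rfl⟩ |
      ⟨a, ha1, ha2, rfl⟩ | ⟨b, hb1, hb2, rfl⟩
    · exact hr₀fresh z h1 h2 (hEq ▸ H.edge_snd e he')
    · exact hr₀fresh z h1 h2 (hEq ▸ hrV (2 * a - 1) (by omega) (by omega))
    · exact hr₀c₀ z b h1 h2 hb1 (by omega) hEq.symm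
    · exact hr₀c₀ z m h1 h2 (by omega) le_rfl hEq.symm
    · exact hr₀c₀ z b h1 h2 hb1 hb2 hEq.symm
  -- B: no edge of H' leaves any c₀ z
  have hB : ∀ e ∈ H'.E, ∀ z, 1 ≤ z → z ≤ m → e.1 ≠ c₀ z := by
    intro e he z h1 h2 hEq
    rcases hcases e he with he' | ⟨a, ha1, ha2, rfl⟩ | ⟨b, hb1, hb2, rfl⟩ |
      ⟨a, ha1, ha2, rfl⟩ | ⟨b, hb1, hb2, rfl⟩
    · exact hc₀fresh z h1 h2 (hEq ▸ H.edge_fst e he')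
    · exact hr₀c₀ a z ha1 (by omega) h1 h2 hEq
    · exact hc₀fresh z h1 h2 (hEq ▸ hcV b hb1 hb2)
    · exact hr₀c₀ a z ha1 (by omega) h1 h2 hEq
    · exact hr₀c₀ n z (by omega) le_rfl h1 h2 hEq
  -- C: edges out of r₀ z for z ≤ n-1
  have hC : ∀ e ∈ H'.E, ∀ z, 1 ≤ z → z ≤ n - 1 → e.1 = r₀ z →
      e = (r₀ z, r (2 * z - 1)) ∨ e = (r₀ z, c₀ m) := by
    intro e he z h1 h2 hEq
    rcases hcases e he with he' | ⟨a, ha1, ha2, rfl⟩ | ⟨b, hb1, hb2, rfl⟩ |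
      ⟨a, ha1, ha2, rfl⟩ | ⟨b, hb1, hb2, rfl⟩
    · exact absurd (hEq ▸ H.edge_fst e he') (hr₀fresh z h1 (by omega))
    · obtain rfl : a = z := hr₀Inj a z ha1 (by omega) h1 (by omega) hEq
      exact Or.inl rfl
    · exact absurd (hEq ▸ hcV b hb1 hb2) (hr₀fresh z h1 (by omega))
    · obtain rfl : a = z := hr₀Inj a z ha1 (by omega) h1 (by omega) hEq
      exact Or.inr rfl
    · have : n = z := hr₀Inj n z (by omega) le_rfl h1 (by omega) hEq
      omega
  -- D: edges out of r₀ n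
  have hD : ∀ e ∈ H'.E, e.1 = r₀ n → ∃ b, 1 ≤ b ∧ b ≤ m ∧ e = (r₀ n, c₀ b) := by
    intro e he hEq
    rcases hcases e he with he' | ⟨a, ha1, ha2, rfl⟩ | ⟨b, hb1, hb2, rfl⟩ |
      ⟨a, ha1, ha2, rfl⟩ | ⟨b, hb1, hb2, rfl⟩
    · exact absurd (hEq ▸ H.edge_fst e he') (hr₀fresh n (by omega) le_rfl)
    · have : a = n := hr₀Inj a n ha1 (by omega) (by omega) le_rfl hEq
      omega
    · exact absurd (hEq ▸ hcV b hb1 hb2) (hr₀fresh n (by omega) le_rfl)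
    · have : a = n := hr₀Inj a n ha1 (by omega) (by omega) le_rfl hEq
      omega
    · exact ⟨b, hb1, hb2, rfl⟩
  -- E: edges into c₀ z
  have hE2 : ∀ e ∈ H'.E, ∀ z, 1 ≤ z → z ≤ m → e.2 = c₀ z →
      (z ≤ m - 1 ∧ e = (c z, c₀ z)) ∨ ∃ a, 1 ≤ a ∧ a ≤ n ∧ e.1 = r₀ a := by
    intro e he z h1 h2 hEq
    rcases hcases e he with he' | ⟨a, ha1, ha2, rfl⟩ | ⟨b, hb1, hb2, rfl⟩ |
      ⟨a, ha1, ha2, rfl⟩ | ⟨b, hb1, hb2, rfl⟩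
    · exact absurd (hEq ▸ H.edge_snd e he') (hc₀fresh z h1 h2)
    · exact absurd (hEq ▸ hrV (2 * a - 1) (by omega) (by omega)) (hc₀fresh z h1 h2)
    · obtain rfl : b = z := hc₀Inj b z hb1 (by omega) h1 h2 hEq
      exact Or.inl ⟨hb2, rfl⟩
    · exact Or.inr ⟨a, ha1, by omega, rfl⟩
    · exact Or.inr ⟨n, by omega, le_rfl, rfl⟩
  -- G: edges of H' between H-vertices are H-edges
  have hG : ∀ e ∈ H'.E, e.1 ∈ H.V → e.2 ∈ H.V → e ∈ H.E := by
    intro e he h1 h2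
    rcases hcases e he with he' | ⟨a, ha1, ha2, rfl⟩ | ⟨b, hb1, hb2, rfl⟩ |
      ⟨a, ha1, ha2, rfl⟩ | ⟨b, hb1, hb2, rfl⟩
    · exact he'
    · exact absurd h1 (hr₀fresh a ha1 (by omega))
    · exact absurd h2 (hc₀fresh b hb1 (by omega))
    · exact absurd h1 (hr₀fresh a ha1 (by omega))
    · exact absurd h1 (hr₀fresh n (by omega) le_rfl)
  intro x y hx1 hxn hy1 hym
  have hxyne : r₀ x ≠ c₀ y := hr₀c₀ x y hx1 hxn hy1 hym
  -- the two-vertex path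
  have two_path : ∀ u' v', u' = r₀ x → v' = c₀ y → (u', v') ∈ H'.E →
      IsPathFromTo H' [u', v'] (r₀ x) (c₀ y) := by
    rintro u' v' rfl rfl hedge
    refine ⟨⟨⟨by simp, ?_, ?_⟩, by simp, by simp⟩, by simp [hxyne]⟩
    · intro v hv
      simp only [List.mem_cons, List.not_mem_nil, or_false] at hv
      rcases hv with rfl | rfl
      · exact hr₀V x hx1 hxn
      · exact hc₀V y hy1 hym
    · simp [List.Chain', List.isChain_cons_cons, hedge]
  rcases Nat.lt_or_ge x n with hxlt | hxe
  · -- x < n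
    rcases Nat.lt_or_ge y m with hylt | hye
    · -- x < n, y < m : the generic case
      have hMval : M x y = U x + V y +
          ∑ i ∈ Finset.Icc (2 * x - 1) (2 * (n - 1)),
            ∑ j ∈ Finset.Icc y (m - 1), P i j := hMdef x y hx1 hxn hy1 hym
      obtain ⟨⟨l₀, hl₀path, hl₀w⟩, hlb⟩ :=
        hHdist (2 * x - 1) y (by omega) (by omega) hy1 (by omega)
      have hl₀ne : l₀ ≠ [] := hl₀path.1.1.1
      have hl₀head : l₀.head hl₀ne = r (2 * x - 1) := by
        have := hl₀path.1.2.1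
        rw [List.head?_eq_head hl₀ne] at this
        exact Option.some_inj.mp this
      have hl₀last : l₀.getLast hl₀ne = c y := by
        have := hl₀path.1.2.2
        rw [List.getLast?_eq_getLast hl₀ne] at this
        exact Option.some_inj.mp this
      have hl₀V : ∀ v ∈ l₀, v ∈ H.V := hl₀path.1.1.2.1
      constructor
      · -- existence
        refine ⟨r₀ x :: l₀ ++ [c₀ y], ⟨⟨⟨by simp, ?_, ?_⟩, by simp, ?_⟩, ?_⟩, ?_⟩
        · intro v hv
          rw [List.mem_append, List.mem_cons, List.mem_singleton] at hv
          rcases hv with (rfl | hv) | rfl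
          · exact hr₀V x hx1 hxn
          · exact hsubV v (hl₀V v hv)
          · exact hc₀V y hy1 hym
        · refine (chain'_cons_concat hl₀ne).mpr ⟨?_, ?_, ?_⟩
          · rw [hl₀head]; exact hEr x hx1 (by omega)
          · exact (hl₀path.1.1.2.2).imp (fun a b hab => hsubE _ hab)
          · rw [hl₀last]; exact hEc y hy1 (by omega)
        · rw [show r₀ x :: l₀ ++ [c₀ y] = (r₀ x :: l₀) ++ [c₀ y] from rfl]
          exact List.getLast?_concat
        · rw [List.nodup_append]
          refine ⟨List.nodup_cons.mpr ⟨?_, hl₀path.2⟩, by simp, ?_⟩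
          · exact fun hmem => hr₀fresh x hx1 hxn (hl₀V _ hmem)
          · intro a ha b hb hab
            rw [List.mem_singleton] at hb
            subst hb hab
            rw [List.mem_cons] at ha
            rcases ha with ha | ha
            · exact hxyne ha.symm
            · exact hc₀fresh y hy1 hym (hl₀V _ ha)
        · rw [walkWeight_cons_concat H'.w _ _ l₀ hl₀ne, hl₀head, hl₀last,
            hw₁ x hx1 (by omega), hw₂ y hy1 (by omega),
            walkWeight_congr H'.w H.w l₀
              ((hl₀path.1.1.2.2).imp (fun a b hab => hwOld (a, b) hab)),
            hl₀w, hMval]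
          ring
      · -- lower bound
        intro l hl
        obtain ⟨mid, rfl⟩ := path_decomp hxyne hl.1.2.1 hl.1.2.2
        have hchain := hl.1.1.2.2
        have hvert := hl.1.1.2.1
        have hnodup := hl.2
        cases mid with
        | nil =>
          exfalso
          have hedge : (r₀ x, c₀ y) ∈ H'.E := by
            simpa [List.Chain', List.isChain_cons_cons] using hchain
          rcases hC _ hedge x hx1 (by omega) rfl with heq | heq
          · have h2 : c₀ y = r (2 * x - 1) := congrArg Prod.snd heq
            exact hc₀fresh y hy1 hym (by rw [h2]; exact hrV (2 * x - 1) (by omega) (by omega))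
          · have h2 : c₀ y = c₀ m := congrArg Prod.snd heq
            have := hc₀Inj y m hy1 hym (by omega) le_rfl h2
            omega
        | cons h t =>
          have hmne : (h :: t : List ℕ) ≠ [] := by simp
          obtain ⟨he1, hmidchain, he2⟩ := (chain'_cons_concat hmne).mp hchain
          have hdl : (r₀ x :: (h :: t) ++ [c₀ y]).dropLast = r₀ x :: h :: t := by
            rw [show r₀ x :: (h :: t) ++ [c₀ y] = (r₀ x :: h :: t) ++ [c₀ y] from rfl,
              List.dropLast_concat]
          -- first edge goes to r (2x-1)
          have hhead : (h :: t).head hmne = r (2 * x - 1) := by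
            rcases hC _ he1 x hx1 (by omega) rfl with heq | heq
            · exact congrArg Prod.snd heq
            · exfalso
              have h2 : (h :: t).head hmne = c₀ m := congrArg Prod.snd heq
              obtain ⟨b', hb'⟩ := chain'_dropLast_mem hchain h (by rw [hdl]; simp)
              exact hB _ hb' m (by omega) le_rfl h2
          -- last edge comes from c y
          have hlast : (h :: t).getLast hmne = c y := by
            rcases hE2 _ he2 y hy1 hym rfl with ⟨-, heq2⟩ | ⟨a, ha1, ha2, heq2⟩
            · exact congrArg Prod.fst heq2
            · exfalso
              obtain ⟨b', hb'⟩ := chain'_tail_mem hchain ((h :: t).getLast hmne)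
                (by exact List.mem_append_left _ (List.getLast_mem hmne))
              exact hA _ hb' a ha1 ha2 heq2
          -- all middle vertices lie in H
          have hmidV : ∀ v ∈ h :: t, v ∈ H.V := by
            intro v hv
            have hvl : v ∈ H'.V := hvert v
              (List.mem_append_left _ (List.mem_cons_of_mem _ hv))
            rw [hV'] at hvl
            simp only [Finset.mem_union, Finset.mem_image, Finset.mem_Icc] at hvl
            rcases hvl with (hv' | ⟨a, ⟨ha1, ha2⟩, rfl⟩) | ⟨b, ⟨hb1, hb2⟩, rfl⟩
            · exact hv'
            · exfalso
              obtain ⟨b', hb'⟩ := chain'_tail_mem hchain (r₀ a)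
                (by exact List.mem_append_left _ hv)
              exact hA _ hb' a ha1 ha2 rfl
            · exfalso
              obtain ⟨b', hb'⟩ := chain'_dropLast_mem hchain (c₀ b)
                (by rw [hdl]; exact List.mem_cons_of_mem _ hv)
              exact hB _ hb' b hb1 hb2 rfl
          have hmidchainH : List.Chain' (fun u v => (u, v) ∈ H.E) (h :: t) :=
            chain'_restrict (p := fun v => v ∈ H.V)
              (fun u v hu hv hE => hG (u, v) hE hu hv) hmidV hmidchain
          have hmidpath : IsPathFromTo H (h :: t) (r (2 * x - 1)) (c y) := by
            refine ⟨⟨⟨hmne, hmidV, hmidchainH⟩, ?_, ?_⟩, ?_⟩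
            · rw [List.head?_eq_head hmne, hhead]
            · rw [List.getLast?_eq_getLast hmne, hlast]
            · exact List.Nodup.sublist
                ((List.sublist_append_left (h :: t) [c₀ y]).cons (r₀ x)) hnodup
          have hge := hlb (h :: t) hmidpath
          rw [walkWeight_cons_concat H'.w _ _ (h :: t) hmne, hhead, hlast,
            hw₁ x hx1 (by omega), hw₂ y hy1 (by omega),
            walkWeight_congr H'.w H.w (h :: t)
              (hmidchainH.imp (fun a b hab => hwOld (a, b) hab)), hMval]
          linarith
    · -- x < n, y = m
      have hyem : m = y := by omega
      subst hyem
      have hMval : M x m = U x + V m := by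
        rw [hMdef x m hx1 hxn hy1 hym, Finset.Icc_eq_empty (by omega : ¬ m ≤ m - 1)]
        simp
      constructor
      · -- existence: the single edge r₀ x → c₀ m
        exact ⟨[r₀ x, c₀ m], two_path _ _ rfl rfl (hEd1 x hx1 (by omega)), by
          rw [walkWeight_pair, hw₃ x hx1 (by omega), hMval]⟩
      · intro l hl
        obtain ⟨mid, rfl⟩ := path_decomp hxyne hl.1.2.1 hl.1.2.2
        have hchain := hl.1.1.2.2
        cases mid with
        | nil =>
          rw [show r₀ x :: ([] : List ℕ) ++ [c₀ m] = [r₀ x, c₀ m] from rfl,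
            walkWeight_pair, hw₃ x hx1 (by omega), hMval]
        | cons h t =>
          exfalso
          have hmne : (h :: t : List ℕ) ≠ [] := by simp
          obtain ⟨he1, hmidchain, he2⟩ := (chain'_cons_concat hmne).mp hchain
          rcases hE2 _ he2 m (by omega) le_rfl rfl with ⟨hle, -⟩ | ⟨a, ha1, ha2, heq2⟩
          · omega
          · obtain ⟨b', hb'⟩ := chain'_tail_mem hchain ((h :: t).getLast hmne)
              (by exact List.mem_append_left _ (List.getLast_mem hmne))
            exact hA _ hb' a ha1 ha2 heq2
  · -- x = n
    have hxen : n = x := by omega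
    subst hxen
    have hMval : M n y = U n + V y := by
      rw [hMdef n y hx1 hxn hy1 hym,
        Finset.Icc_eq_empty (by omega : ¬ 2 * n - 1 ≤ 2 * (n - 1))]
      simp
    constructor
    · exact ⟨[r₀ n, c₀ y], two_path _ _ rfl rfl (hEd2 y hy1 hym), by
        rw [walkWeight_pair, hw₄ y hy1 hym, hMval]⟩
    · intro l hl
      obtain ⟨mid, rfl⟩ := path_decomp hxyne hl.1.2.1 hl.1.2.2
      have hchain := hl.1.1.2.2
      cases mid with
      | nil =>
        rw [show r₀ n :: ([] : List ℕ) ++ [c₀ y] = [r₀ n, c₀ y] from rfl,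
          walkWeight_pair, hw₄ y hy1 hym, hMval]
      | cons h t =>
        exfalso
        have hmne : (h :: t : List ℕ) ≠ [] := by simp
        obtain ⟨he1, hmidchain, he2⟩ := (chain'_cons_concat hmne).mp hchain
        obtain ⟨b, hb1, hb2, heq⟩ := hD _ he1 rfl
        have hh : h = c₀ b := congrArg Prod.snd heq
        have hdl : (r₀ n :: (h :: t) ++ [c₀ y]).dropLast = r₀ n :: h :: t := by
          rw [show r₀ n :: (h :: t) ++ [c₀ y] = (r₀ n :: h :: t) ++ [c₀ y] from rfl,
            List.dropLast_concat]
        obtain ⟨b', hb'⟩ := chain'_dropLast_mem hchain h (by rw [hdl]; simp)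
        exact hB _ hb' b hb1 hb2 hh
end
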